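/- arXiv:0901.1426 — 9 statements merged into one kernel-verified Lean document; each statement's English description precedes it below -/
import Mathlib

section
/- Let F be a field, d ≥ 2, and T = F⟨x₁,…,x_d⟩ the free associative algebra graded by total degree, with T_n the homogeneous component of degree n. Let I ⊆ T be a two-sided ideal generated by homogeneous polynomials f₁, f₂, … each of degree ≥ 2, and let r_ℓ denote the number of generators f_j of degree ℓ. Write T_n = I_n ⊕ B_n where I_n = I ∩ T_n, and set b_n = dim B_n. Then for all n ≥ 2: b_n ≥ d·b_{n-1} − Σ_{j=0}^{n-2} r_{n-j}·b_j. -/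
/-- The degree-`n` homogeneous component of the free algebra `F⟨x₁,…,x_d⟩`. -/
noncomputable def freeAlgGrade (F : Type*) [Field F] (d : ℕ) (n : ℕ) :
    Submodule F (FreeAlgebra F (Fin d)) :=
  (Submodule.span F (Set.range (FreeAlgebra.ι F : Fin d → FreeAlgebra F (Fin d)))) ^ n

namespace GolodAux

open Submodule Set Module

section MA

variable (F : Type*) [Field F] (d : ℕ)

abbrev GA := MonoidAlgebra F (FreeMonoid (Fin d))

noncomputable def mono (w : FreeMonoid (Fin d)) : GA F d := MonoidAlgebra.single w 1

noncomputable def Sn (n : ℕ) : Submodule F (GA F d) :=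
  MonoidAlgebra.supported F F {w : FreeMonoid (Fin d) | w.length = n}

theorem Sn_eq_span (n : ℕ) : Sn F d n =
    span F (mono F d '' {w : FreeMonoid (Fin d) | w.length = n}) :=
  MonoidAlgebra.supported_eq_span_single F _

theorem Sn_mul (m n : ℕ) : Sn F d m * Sn F d n = Sn F d (m + n) := by
  rw [Sn_eq_span, Sn_eq_span, Sn_eq_span, span_mul_span]
  congr 1
  ext x
  constructor
  · rintro ⟨a, ⟨u, hu, rfl⟩, b, ⟨v, hv, rfl⟩, rfl⟩
    refine ⟨u * v, ?_, ?_⟩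
    · simp only [mem_setOf_eq] at *
      rw [FreeMonoid.length_mul, hu, hv]
    · simp [mono, MonoidAlgebra.single_mul_single]
  · rintro ⟨w, hw, rfl⟩
    refine ⟨mono F d (FreeMonoid.ofList ((FreeMonoid.toList w).take m)), ⟨_, ?_, rfl⟩,
      mono F d (FreeMonoid.ofList ((FreeMonoid.toList w).drop m)), ⟨_, ?_, rfl⟩, ?_⟩
    · simp only [mem_setOf_eq] at hw ⊢
      show List.length (List.take m (FreeMonoid.toList w)) = m
      have : List.length (FreeMonoid.toList w) = m + n := hw
      simp [List.length_take, this]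
    · simp only [mem_setOf_eq] at hw ⊢
      show List.length (List.drop m (FreeMonoid.toList w)) = n
      have : List.length (FreeMonoid.toList w) = m + n := hw
      simp [this]
    · simp only [mono, MonoidAlgebra.single_mul_single, mul_one]
      congr 1
      rw [← FreeMonoid.ofList_append, List.take_append_drop]
      exact FreeMonoid.ofList_toList w

def wordEquiv (n : ℕ) : {w : FreeMonoid (Fin d) | w.length = n} ≃ List.Vector (Fin d) n where
  toFun w := ⟨FreeMonoid.toList w.1, w.2⟩
  invFun v := ⟨FreeMonoid.ofList v.1, v.2⟩
  left_inv w := rfl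
  right_inv v := rfl

noncomputable instance (n : ℕ) : Fintype {w : FreeMonoid (Fin d) | w.length = n} :=
  Fintype.ofEquiv _ (wordEquiv d n).symm

theorem card_words (n : ℕ) : Fintype.card {w : FreeMonoid (Fin d) | w.length = n} = d ^ n := by
  rw [Fintype.card_congr (wordEquiv d n), card_vector, Fintype.card_fin]

noncomputable def SnEquiv (n : ℕ) : Sn F d n ≃ₗ[F] ({w : FreeMonoid (Fin d) | w.length = n} →₀ F) :=
  MonoidAlgebra.supportedEquivFinsupp _

instance Sn_fd (n : ℕ) : FiniteDimensional F (Sn F d n) :=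
  Module.Finite.equiv (SnEquiv F d n).symm

theorem finrank_Sn (n : ℕ) : Module.finrank F (Sn F d n) = d ^ n := by
  rw [(SnEquiv F d n).finrank_eq, Module.finrank_finsupp_self, card_words]

theorem top_eq_iSup_Sn : (⊤ : Submodule F (GA F d)) = ⨆ n, Sn F d n := by
  have : (Set.univ : Set (FreeMonoid (Fin d))) = ⋃ n, {w | w.length = n} := by
    ext w; simp
  refine le_antisymm (fun x _ => ?_) le_top
  have hx : x.coeff ∈ Finsupp.supported F F (⋃ n, {w : FreeMonoid (Fin d) | w.length = n}) := by
    rw [← this]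
    exact fun a _ => trivial
  rw [Finsupp.supported_iUnion] at hx
  have hx' := Submodule.mem_map_of_mem
    (f := (MonoidAlgebra.coeffLinearEquiv (S := F) (M := FreeMonoid (Fin d)) F).symm.toLinearMap) hx
  rw [Submodule.map_iSup] at hx'
  show x ∈ ⨆ n, MonoidAlgebra.supported F F _
  simp_rw [MonoidAlgebra.supported_eq_map]
  convert hx' using 1
  exact ((MonoidAlgebra.coeffLinearEquiv F).symm_apply_apply x).symm

theorem Sn_disjoint (n : ℕ) : Disjoint (⨆ m, ⨆ _ : m ≠ n, Sn F d m) (Sn F d n) := by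
  refine Disjoint.mono_left ?_
    (show Disjoint (MonoidAlgebra.supported F F {w : FreeMonoid (Fin d) | w.length ≠ n})
      (Sn F d n) from ?_)
  · refine iSup_le fun m => iSup_le fun hm => MonoidAlgebra.supported_mono ?_
    intro w hw
    simp only [mem_setOf_eq] at hw ⊢
    omega
  · rw [Submodule.disjoint_def]
    intro x h1 h2
    have h := Submodule.disjoint_def.mp (Finsupp.disjoint_supported_supported (M := F) (R := F)
      (s := {w : FreeMonoid (Fin d) | w.length ≠ n}) (t := {w | w.length = n})
      (Set.disjoint_left.mpr fun w hw hw2 => hw hw2)) _ h1 h2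
    exact MonoidAlgebra.coeff_injective h

noncomputable def eqv : FreeAlgebra F (Fin d) ≃ₐ[F] GA F d :=
  FreeAlgebra.equivMonoidAlgebraFreeMonoid

theorem Sn_zero : Sn F d 0 = 1 := by
  rw [Sn_eq_span, one_eq_span]
  congr 1
  have : {w : FreeMonoid (Fin d) | w.length = 0} = {1} := by
    ext w; simp [FreeMonoid.length_eq_zero]
  rw [this, Set.image_singleton]
  have h1 : mono F d 1 = 1 := by simp [mono]; rfl
  rw [h1]

theorem Sn_one : Sn F d 1 = span F (Set.range fun i : Fin d => mono F d (FreeMonoid.of i)) := by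
  rw [Sn_eq_span]
  congr 1
  ext x
  simp only [Set.mem_image, Set.mem_range, mem_setOf_eq]
  constructor
  · rintro ⟨w, hw, rfl⟩
    obtain ⟨m, rfl⟩ := FreeMonoid.length_eq_one.mp hw
    exact ⟨m, rfl⟩
  · rintro ⟨i, rfl⟩
    exact ⟨FreeMonoid.of i, FreeMonoid.length_of i, rfl⟩

theorem Sn_pow (n : ℕ) : Sn F d 1 ^ n = Sn F d n := by
  induction n with
  | zero => simpa using (Sn_zero F d).symm
  | succ k ih => rw [pow_succ, ih, Sn_mul]

theorem map_grade (n : ℕ) :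
    (freeAlgGrade F d n).map (eqv F d).toLinearMap = Sn F d n := by
  rw [freeAlgGrade, ← AlgEquiv.toLinearEquiv_toLinearMap, ← AlgEquiv.toAlgHom_toLinearMap, Submodule.map_pow, ← Sn_pow]
  congr 1
  rw [Submodule.map_span, ← Set.range_comp, Sn_one]
  congr 1
  ext x
  constructor
  · rintro ⟨i, rfl⟩
    refine ⟨i, ?_⟩
    simp [eqv, FreeAlgebra.equivMonoidAlgebraFreeMonoid, mono, MonoidAlgebra.of_apply]
  · rintro ⟨i, rfl⟩
    refine ⟨i, ?_⟩
    simp [eqv, FreeAlgebra.equivMonoidAlgebraFreeMonoid, mono, MonoidAlgebra.of_apply]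

-- transported
theorem grade_fd (n : ℕ) : FiniteDimensional F (freeAlgGrade F d n) := by
  have h := map_grade F d n
  haveI : FiniteDimensional F ((freeAlgGrade F d n).map (eqv F d).toLinearMap) := by
    rw [h]; infer_instance
  exact Module.Finite.equiv
    (Submodule.equivMapOfInjective (eqv F d).toLinearMap
      (show Function.Injective ⇑(eqv F d).toLinearMap from (eqv F d).injective)
      (freeAlgGrade F d n)).symm

theorem finrank_grade (n : ℕ) : Module.finrank F (freeAlgGrade F d n) = d ^ n := by
  have h := (eqv F d).toLinearEquiv.finrank_map_eq (freeAlgGrade F d n)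
  rw [← finrank_Sn F d n, ← map_grade F d n]
  rw [← h]

theorem top_eq_iSup_grade :
    (⊤ : Submodule F (FreeAlgebra F (Fin d))) = ⨆ n, freeAlgGrade F d n := by
  apply Submodule.map_injective_of_injective
    (show Function.Injective (eqv F d).toLinearMap from (eqv F d).toLinearEquiv.injective)
  rw [Submodule.map_iSup]
  simp_rw [map_grade]
  rw [← top_eq_iSup_Sn, Submodule.map_top]
  ext x
  simp only [LinearMap.mem_range, mem_top, iff_true]
  exact ⟨(eqv F d).symm x, by simp⟩

theorem grade_disjoint (n : ℕ) :
    Disjoint (⨆ m, ⨆ _ : m ≠ n, freeAlgGrade F d m) (freeAlgGrade F d n) := by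
  rw [disjoint_iff]
  apply Submodule.map_injective_of_injective
    (show Function.Injective (eqv F d).toLinearMap from (eqv F d).toLinearEquiv.injective)
  rw [Submodule.map_inf (eqv F d).toLinearMap
      (show Function.Injective ⇑(eqv F d).toLinearMap from (eqv F d).injective),
    Submodule.map_bot, Submodule.map_iSup]
  simp_rw [Submodule.map_iSup, map_grade]
  exact disjoint_iff.mp (Sn_disjoint F d n)


end MA

section generic
variable {F : Type*} [Field F] {A : Type*} [Ring A] [Algebra F A]

theorem span_singleton_mul_eq_map (x : A) (N : Submodule F A) :
    span F {x} * N = N.map (LinearMap.mulLeft F x) := by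
  ext y
  simp only [Submodule.mem_span_singleton_mul, Submodule.mem_map, LinearMap.mulLeft_apply]

theorem finrank_sup_le (p q : Submodule F A) [FiniteDimensional F p] [FiniteDimensional F q] :
    finrank F ↥(p ⊔ q) ≤ finrank F p + finrank F q := by
  have := Submodule.finrank_sup_add_finrank_inf_eq p q
  omega

theorem finset_span_mul_finite (s : Finset A) (N : Submodule F A) [FiniteDimensional F N] :
    FiniteDimensional F (span F (s : Set A) * N) := by
  classical
  induction s using Finset.induction with
  | empty => rw [Finset.coe_empty, span_empty, bot_mul]; infer_instance
  | insert hx ih =>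
    rw [Finset.coe_insert, span_insert, Submodule.sup_mul, span_singleton_mul_eq_map]
    infer_instance

theorem finset_span_mul_finrank_le (s : Finset A) (N : Submodule F A) [FiniteDimensional F N] :
    finrank F ↥(span F (s : Set A) * N) ≤ s.card * finrank F N := by
  classical
  induction s using Finset.induction with
  | empty =>
    rw [Finset.coe_empty, span_empty, bot_mul]
    simp
  | @insert x s hx ih =>
    rw [Finset.coe_insert, span_insert, Submodule.sup_mul, span_singleton_mul_eq_map]
    haveI := finset_span_mul_finite s N
    calc finrank F ↥(N.map (LinearMap.mulLeft F x) ⊔ span F (s : Set A) * N)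
        ≤ finrank F ↥(N.map (LinearMap.mulLeft F x)) + finrank F ↥(span F (s : Set A) * N) :=
          finrank_sup_le _ _
      _ ≤ finrank F N + s.card * finrank F N :=
          Nat.add_le_add (Submodule.finrank_map_le _ _) ih
      _ = (insert x s).card * finrank F N := by
          rw [Finset.card_insert_of_notMem hx]; ring

theorem finrank_finset_sup_le {ι : Type*} (s : Finset ι) (S : ι → Submodule F A)
    [∀ i, FiniteDimensional F (S i)] :
    finrank F ↥(s.sup S) ≤ ∑ i ∈ s, finrank F (S i) := by
  classical
  induction s using Finset.induction with
  | empty => simp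
  | @insert x s hx ih =>
    rw [Finset.sup_insert, Finset.sum_insert hx]
    exact le_trans (finrank_sup_le _ _) (Nat.add_le_add le_rfl ih)

end generic

end GolodAux

open Submodule Set Module GolodAux

theorem golod_basic_inequality
    (F : Type*) [Field F] (d : ℕ) (hd : 2 ≤ d)
    (f : ℕ → FreeAlgebra F (Fin d)) (deg : ℕ → ℕ)
    (hdeg : ∀ j, 2 ≤ deg j)
    (hhom : ∀ j, f j ∈ freeAlgGrade F d (deg j))
    (I : Submodule F (FreeAlgebra F (Fin d)))
    (hI : I = Submodule.span F {x | ∃ j a b, x = a * f j * b})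
    (r : ℕ → ℕ)
    (hr : ∀ ℓ, {j | deg j = ℓ}.Finite ∧ {j | deg j = ℓ}.ncard = r ℓ)
    (B : ℕ → Submodule F (FreeAlgebra F (Fin d)))
    (hBle : ∀ n, B n ≤ freeAlgGrade F d n)
    (hBdisj : ∀ n, B n ⊓ (I ⊓ freeAlgGrade F d n) = ⊥)
    (hBsup : ∀ n, B n ⊔ (I ⊓ freeAlgGrade F d n) = freeAlgGrade F d n)
    (b : ℕ → ℕ) (hb : ∀ n, b n = Module.finrank F (B n)) :
    ∀ n : ℕ,
      (b (n + 2) : ℝ) ≥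
        d * b (n + 1) - ∑ j ∈ Finset.range (n + 1), (r (n + 2 - j) : ℝ) * b j := by
  classical
  intro n
  set T : ℕ → Submodule F (FreeAlgebra F (Fin d)) := freeAlgGrade F d with hTdef
  haveI instT : ∀ m, FiniteDimensional F (T m) := grade_fd F d
  haveI instB : ∀ m, FiniteDimensional F (B m) :=
    fun m => Submodule.finiteDimensional_of_le (hBle m)
  -- basic multiplicativity
  have hTmul : ∀ a c : ℕ, T a * T c = T (a + c) := fun a c => (pow_add _ a c).symm
  have hfj : ∀ j, span F {f j} ≤ T (deg j) := fun j =>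
    (span_singleton_le_iff_mem _ _).mpr (hhom j)
  -- the graded pieces of the ideal
  set K : ℕ → Submodule F (FreeAlgebra F (Fin d)) := fun m =>
    ⨆ j, ⨆ p, ⨆ s, ⨆ _ : p + deg j + s = m, T p * span F {f j} * T s with hKdef
  have hcomp_le_K : ∀ j p s, T p * span F {f j} * T s ≤ K (p + deg j + s) := by
    intro j p s
    exact le_iSup_of_le j (le_iSup_of_le p (le_iSup_of_le s (le_iSup_of_le rfl le_rfl)))
  have hKleT : ∀ m, K m ≤ T m := by
    intro m
    refine iSup_le fun j => iSup_le fun p => iSup_le fun s => iSup_le fun h => ?_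
    calc T p * span F {f j} * T s ≤ T p * T (deg j) * T s :=
          mul_le_mul' (mul_le_mul' le_rfl (hfj j)) le_rfl
      _ = T m := by rw [hTmul, hTmul, h]
  -- ideal facts
  have hgen : ∀ j (a c : FreeAlgebra F (Fin d)), a * f j * c ∈ I := by
    intro j a c
    rw [hI]
    exact subset_span ⟨j, a, c, rfl⟩
  have hIdeal_left : ∀ (m x : FreeAlgebra F (Fin d)), x ∈ I → m * x ∈ I := by
    intro m x hx
    rw [hI] at hx ⊢
    refine Submodule.span_induction ?_ ?_ ?_ ?_ hx
    · rintro y ⟨j, a, c, rfl⟩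
      refine subset_span ⟨j, m * a, c, by rw [← mul_assoc, ← mul_assoc]⟩
    · simp
    · intro y z _ _ hy hz
      rw [mul_add]; exact add_mem hy hz
    · intro k y _ hy
      rw [mul_smul_comm]; exact smul_mem _ _ hy
  have hTfT_le_I : ∀ j (a c : ℕ), T a * span F {f j} * T c ≤ I := by
    intro j a c
    rw [Submodule.mul_le]
    intro u hu v hv
    refine Submodule.mul_induction_on hu ?_ ?_
    · intro m _ x hxspan
      obtain ⟨k, rfl⟩ := Submodule.mem_span_singleton.mp hxspan
      have : m * (k • f j) * v = k • (m * f j * v) := by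
        rw [mul_smul_comm, smul_mul_assoc]
      rw [this]
      exact smul_mem _ _ (hgen j m v)
    · intro x y hx hy
      rw [add_mul]; exact add_mem hx hy
  -- I is contained in the sup of the K's
  have hI_le_iSupK : I ≤ ⨆ m, K m := by
    rw [hI, span_le]
    rintro x ⟨j, a, c, rfl⟩
    have step1 : ∀ p (a' : FreeAlgebra F (Fin d)), a' ∈ T p →
        ∀ s (c' : FreeAlgebra F (Fin d)), c' ∈ T s → a' * f j * c' ∈ ⨆ m, K m := by
      intro p a' ha' s c' hc'
      have h1 : a' * f j * c' ∈ T p * span F {f j} * T s :=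
        Submodule.mul_mem_mul (Submodule.mul_mem_mul ha' (mem_span_singleton_self _)) hc'
      exact le_iSup_of_le (p + deg j + s) (hcomp_le_K j p s) h1
    have step2 : ∀ p (a' : FreeAlgebra F (Fin d)), a' ∈ T p →
        ∀ c' : FreeAlgebra F (Fin d), a' * f j * c' ∈ ⨆ m, K m := by
      intro p a' ha' c'
      have hc' : c' ∈ ⨆ s, T s := by rw [← top_eq_iSup_grade F d]; trivial
      refine Submodule.iSup_induction (motive := fun y => a' * f j * y ∈ ⨆ m, K m) _ hc'
        (fun s y hy => step1 p a' ha' s y hy) ?_ ?_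
      · show a' * f j * 0 ∈ ⨆ m, K m
        rw [mul_zero]; exact zero_mem _
      · intro y z hy hz
        show a' * f j * (y + z) ∈ ⨆ m, K m
        rw [mul_add]; exact add_mem hy hz
    have ha : a ∈ ⨆ p, T p := by rw [← top_eq_iSup_grade F d]; trivial
    refine Submodule.iSup_induction (motive := fun y => y * f j * c ∈ ⨆ m, K m) _ ha
      (fun p y hy => step2 p y hy c) ?_ ?_
    · show (0 : FreeAlgebra F (Fin d)) * f j * c ∈ ⨆ m, K m
      rw [zero_mul, zero_mul]; exact zero_mem _
    · intro y z hy hz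
      show (y + z) * f j * c ∈ ⨆ m, K m
      rw [add_mul, add_mul]; exact add_mem hy hz
  -- graded decomposition: I ∩ T m ⊆ K m
  have hIinT : ∀ m, I ⊓ T m ≤ K m := by
    intro m x hx
    obtain ⟨hxI, hxT⟩ := hx
    have hxK : x ∈ ⨆ k, K k := hI_le_iSupK hxI
    rw [Submodule.mem_iSup_iff_exists_finsupp] at hxK
    obtain ⟨a, ha, hsum⟩ := hxK
    have hxm : x - a m = ∑ i ∈ a.support.erase m, a i := by
      rw [← hsum, Finsupp.sum]
      by_cases hm : m ∈ a.support
      · rw [← Finset.add_sum_erase _ _ hm, add_sub_cancel_left]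
      · rw [Finset.erase_eq_of_notMem hm, Finsupp.notMem_support_iff.mp hm, sub_zero]
    have h1 : x - a m ∈ T m := sub_mem hxT (hKleT m (ha m))
    have h2 : x - a m ∈ ⨆ k, ⨆ _ : k ≠ m, T k := by
      rw [hxm]
      refine Submodule.sum_mem _ fun i hi => ?_
      have hle : T i ≤ ⨆ k, ⨆ _ : k ≠ m, T k :=
        le_iSup_of_le i (le_iSup (fun _ : i ≠ m => T i) (Finset.ne_of_mem_erase hi))
      exact hle (hKleT i (ha i))
    have : x - a m = 0 := by
      have := (grade_disjoint F d m).le_bot (mem_inf.mpr ⟨h2, h1⟩)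
      simpa using this
    have hxa : x = a m := by rwa [sub_eq_zero] at this
    rw [hxa]
    exact ha m
  -- the target bound submodule
  set Fsp : ℕ → Submodule F (FreeAlgebra F (Fin d)) := fun ℓ =>
    span F (f '' {j | deg j = ℓ}) with hFspdef
  set Q : Submodule F (FreeAlgebra F (Fin d)) :=
    T 1 * (I ⊓ T (n + 1)) ⊔
      (Finset.range (n + 1)).sup (fun j => Fsp (n + 2 - j) * B j) with hQdef
  -- K (n+2) ≤ Q
  have hKQ : K (n + 2) ≤ Q := by
    refine iSup_le fun j => iSup_le fun p => iSup_le fun s => iSup_le fun hpjs => ?_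
    have hdj := hdeg j
    rcases Nat.eq_zero_or_pos p with hp | hp
    · -- p = 0
      subst hp
      have hT0 : T 0 * span F {f j} * T s = span F {f j} * T s := by
        rw [hTdef]
        show freeAlgGrade F d 0 * _ * _ = _
        rw [freeAlgGrade, pow_zero, one_mul]
      rw [hT0]
      have hs : s ≤ n := by omega
      have hjs : deg j = n + 2 - s := by omega
      have hsplit : span F {f j} * T s =
          span F {f j} * B s ⊔ span F {f j} * (I ⊓ T s) := by
        rw [← Submodule.mul_sup, hBsup s]
      rw [hsplit]
      refine sup_le ?_ ?_
      · refine le_trans ?_ (le_sup_right)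
        refine le_trans ?_ (Finset.le_sup (Finset.mem_range.mpr (by omega : s < n + 1)))
        exact mul_le_mul'
          (span_mono (singleton_subset_iff.mpr ⟨j, by simpa using hjs, rfl⟩)) le_rfl
      · refine le_trans ?_ le_sup_left
        have hTdeg : T (deg j) = T 1 * T (deg j - 1) := by
          rw [hTmul]; congr 1; omega
        calc span F {f j} * (I ⊓ T s) ≤ (T 1 * T (deg j - 1)) * (I ⊓ T s) :=
              mul_le_mul' (le_trans (hfj j) (le_of_eq hTdeg)) le_rfl
          _ = T 1 * (T (deg j - 1) * (I ⊓ T s)) := mul_assoc _ _ _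
          _ ≤ T 1 * (I ⊓ T (n + 1)) := by
              refine mul_le_mul' le_rfl (le_inf ?_ ?_)
              · rw [Submodule.mul_le]
                intro u hu v hv
                exact hIdeal_left u v (mem_inf.mp hv).1
              · calc T (deg j - 1) * (I ⊓ T s) ≤ T (deg j - 1) * T s :=
                      mul_le_mul' le_rfl inf_le_right
                  _ = T (n + 1) := by rw [hTmul]; congr 1; omega
    · -- p ≥ 1
      refine le_trans ?_ le_sup_left
      have hTp : T p = T 1 * T (p - 1) := by rw [hTmul]; congr 1; omega
      calc T p * span F {f j} * T s = T 1 * (T (p - 1) * span F {f j} * T s) := by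
            rw [hTp, mul_assoc, mul_assoc, mul_assoc]
        _ ≤ T 1 * (I ⊓ T (n + 1)) := by
            refine mul_le_mul' le_rfl (le_inf (hTfT_le_I j _ _) ?_)
            calc T (p - 1) * span F {f j} * T s ≤ T (p - 1) * T (deg j) * T s :=
                  mul_le_mul' (mul_le_mul' le_rfl (hfj j)) le_rfl
              _ = T (n + 1) := by rw [hTmul, hTmul]; congr 1; omega
  -- T (n+2) ≤ B (n+2) ⊔ Q
  have hTQ : T (n + 2) ≤ B (n + 2) ⊔ Q := by
    rw [← hBsup (n + 2)]
    exact sup_le le_sup_left (le_trans (le_trans (hIinT (n + 2)) hKQ) le_sup_right)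
  -- finite dimensionality of the pieces
  haveI hFD_IT : FiniteDimensional F ↥(I ⊓ T (n + 1)) :=
    Submodule.finiteDimensional_of_le inf_le_right
  -- T 1 as span of a finset
  set t1 : Finset (FreeAlgebra F (Fin d)) :=
    Finset.univ.image (FreeAlgebra.ι F : Fin d → FreeAlgebra F (Fin d)) with ht1def
  have ht1 : T 1 = span F (t1 : Set (FreeAlgebra F (Fin d))) := by
    rw [hTdef]
    show freeAlgGrade F d 1 = _
    rw [freeAlgGrade, pow_one, ht1def]
    congr 1
    simp
  have ht1card : t1.card ≤ d := by
    calc t1.card ≤ Finset.univ.card := Finset.card_image_le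
      _ = d := by simp
  haveI hFD_T1I : FiniteDimensional F ↥(T 1 * (I ⊓ T (n + 1))) := by
    rw [ht1]; exact finset_span_mul_finite _ _
  have hT1I_rank : finrank F ↥(T 1 * (I ⊓ T (n + 1))) ≤ d * finrank F ↥(I ⊓ T (n + 1)) := by
    rw [ht1]
    exact le_trans (finset_span_mul_finrank_le t1 _)
      (Nat.mul_le_mul_right _ ht1card)
  -- Fsp pieces as finsets
  have hFspFinset : ∀ ℓ, ∃ t : Finset (FreeAlgebra F (Fin d)),
      Fsp ℓ = span F (t : Set (FreeAlgebra F (Fin d))) ∧ t.card ≤ r ℓ := by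
    intro ℓ
    obtain ⟨hfin, hcard⟩ := hr ℓ
    refine ⟨(hfin.image f).toFinset, by rw [hFspdef, Set.Finite.coe_toFinset], ?_⟩
    calc (hfin.image f).toFinset.card = (f '' {j | deg j = ℓ}).ncard := by
          rw [Set.ncard_eq_toFinset_card _ (hfin.image f)]
      _ ≤ {j | deg j = ℓ}.ncard := Set.ncard_image_le hfin
      _ = r ℓ := hcard
  haveI hFD_FspB : ∀ j : ℕ, FiniteDimensional F ↥(Fsp (n + 2 - j) * B j) := by
    intro j
    obtain ⟨t, ht, _⟩ := hFspFinset (n + 2 - j)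
    rw [ht]
    exact finset_span_mul_finite _ _
  have hFspB_rank : ∀ j : ℕ, finrank F ↥(Fsp (n + 2 - j) * B j) ≤ r (n + 2 - j) * b j := by
    intro j
    obtain ⟨t, ht, htc⟩ := hFspFinset (n + 2 - j)
    rw [ht, hb j]
    exact le_trans (finset_span_mul_finrank_le t _) (Nat.mul_le_mul_right _ htc)
  haveI hFD_sup : FiniteDimensional F
      ↥((Finset.range (n + 1)).sup (fun j => Fsp (n + 2 - j) * B j)) := by
    infer_instance
  haveI hFD_Q : FiniteDimensional F Q := by
    rw [hQdef]; infer_instance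
  -- the numeric bound
  have hrank_sum : finrank F ↥(B (n + 1)) + finrank F ↥(I ⊓ T (n + 1)) = d ^ (n + 1) := by
    have h := Submodule.finrank_sup_add_finrank_inf_eq (B (n + 1)) (I ⊓ T (n + 1))
    rw [hBsup (n + 1), hBdisj (n + 1)] at h
    rw [← h, finrank_grade, finrank_bot]
    omega
  have hmain : (d : ℕ) ^ (n + 2) ≤ b (n + 2) + d * finrank F ↥(I ⊓ T (n + 1)) +
      ∑ j ∈ Finset.range (n + 1), r (n + 2 - j) * b j := by
    haveI : FiniteDimensional F ↥(B (n + 2) ⊔ Q) := inferInstance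
    calc (d : ℕ) ^ (n + 2) = finrank F ↥(T (n + 2)) := (finrank_grade F d (n + 2)).symm
      _ ≤ finrank F ↥(B (n + 2) ⊔ Q) := Submodule.finrank_mono hTQ
      _ ≤ finrank F ↥(B (n + 2)) + finrank F Q := finrank_sup_le _ _
      _ ≤ b (n + 2) + (finrank F ↥(T 1 * (I ⊓ T (n + 1))) +
            finrank F ↥((Finset.range (n + 1)).sup (fun j => Fsp (n + 2 - j) * B j))) := by
          rw [hb, hQdef]
          exact Nat.add_le_add le_rfl (finrank_sup_le _ _)
      _ ≤ b (n + 2) + (d * finrank F ↥(I ⊓ T (n + 1)) +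
            ∑ j ∈ Finset.range (n + 1), r (n + 2 - j) * b j) := by
          refine Nat.add_le_add le_rfl (Nat.add_le_add hT1I_rank ?_)
          exact le_trans (finrank_finset_sup_le _ _)
            (Finset.sum_le_sum fun j _ => hFspB_rank j)
      _ = b (n + 2) + d * finrank F ↥(I ⊓ T (n + 1)) +
            ∑ j ∈ Finset.range (n + 1), r (n + 2 - j) * b j := by ring
  -- pass to the reals
  have hb1 : (b (n + 1) : ℝ) = finrank F ↥(B (n + 1)) := by rw [hb]
  have hc1 : ((finrank F ↥(B (n + 1)) : ℕ) : ℝ) + (finrank F ↥(I ⊓ T (n + 1)) : ℝ)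
      = (d : ℝ) ^ (n + 1) := by exact_mod_cast congrArg (Nat.cast (R := ℝ)) hrank_sum
  have hc2 : ((d : ℝ)) ^ (n + 2) ≤ (b (n + 2) : ℝ) +
      (d : ℝ) * (finrank F ↥(I ⊓ T (n + 1)) : ℝ) +
      ∑ j ∈ Finset.range (n + 1), (r (n + 2 - j) : ℝ) * (b j : ℝ) := by
    exact_mod_cast hmain
  have hpow : (d : ℝ) ^ (n + 2) = (d : ℝ) * (d : ℝ) ^ (n + 1) := by ring
  rw [ge_iff_le, sub_le_iff_le_add]
  nlinarith [hc1, hc2, hpow, hb1]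
end

section
/- Let F be a field, d ≥ 2, T = F⟨x₁,…,x_d⟩, R the span of a set of homogeneous polynomials of degree ≥ 2, I = TRT the two-sided ideal generated by R, and B a graded vector-space complement of I in T (so T = I ⊕ B). Then I = I·T₁ + B·R, where T₁ is the span of x₁,…,x_d. -/
theorem golod_ideal_decomposition
    (F : Type*) [Field F] (d : ℕ) (hd : 2 ≤ d)
    (S : Set (FreeAlgebra F (Fin d)))
    (hS : ∀ s ∈ S, ∃ n, 2 ≤ n ∧ s ∈ freeAlgGrade F d n)
    (R I B : Submodule F (FreeAlgebra F (Fin d)))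
    (hR : R = Submodule.span F S)
    (hI : I = ⊤ * R * ⊤)
    (hB : IsCompl I B)
    (hBgraded : B = ⨆ n, B ⊓ freeAlgGrade F d n) :
    I = I * freeAlgGrade F d 1 ⊔ B * R := by
  set A := FreeAlgebra F (Fin d)
  set P : Submodule F A :=
    Submodule.span F (Set.range (FreeAlgebra.ι F : Fin d → A)) with hP
  have hP1 : freeAlgGrade F d 1 = P := pow_one _
  -- ⊤ * ⊤ = ⊤
  have htt : (⊤ : Submodule F A) * ⊤ = ⊤ :=
    le_antisymm le_top (by
      calc (⊤ : Submodule F A) = ⊤ * 1 := (mul_one _).symm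
        _ ≤ ⊤ * ⊤ := mul_le_mul' le_rfl le_top)
  -- I absorbs ⊤ on the right
  have hIT : I * ⊤ = I := by rw [hI, mul_assoc, htt]
  -- every element of A is a constant plus something in ⊤ * P
  have htop : (⊤ : Submodule F A) = 1 ⊔ ⊤ * P := by
    refine le_antisymm ?_ le_top
    rintro a -
    set M : Submodule F A := 1 ⊔ ⊤ * P with hM
    have hMM : M * M ≤ M := by
      rw [hM, Submodule.sup_mul, Submodule.mul_sup, Submodule.mul_sup,
        one_mul, one_mul, mul_one]
      have h4 : ⊤ * P * (⊤ * P) ≤ ⊤ * P := by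
        rw [← mul_assoc, mul_assoc ⊤ P ⊤]
        exact mul_le_mul' le_top le_rfl
      exact sup_le (sup_le le_sup_left le_sup_right)
        (sup_le le_sup_right (le_trans h4 le_sup_right))
    show a ∈ M
    induction a using FreeAlgebra.induction with
    | grade0 r =>
        exact Submodule.mem_sup_left (Submodule.algebraMap_mem r)
    | grade1 x =>
        refine Submodule.mem_sup_right ?_
        have : (1 : A) * FreeAlgebra.ι F x ∈ (⊤ : Submodule F A) * P :=
          Submodule.mul_mem_mul Submodule.mem_top
            (Submodule.subset_span (Set.mem_range_self x))
        simpa using this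
    | mul a b ha hb => exact hMM (Submodule.mul_mem_mul ha hb)
    | add a b ha hb => exact add_mem ha hb
  -- R ≤ ⊤ * P
  have hRle : R ≤ ⊤ * P := by
    rw [hR, Submodule.span_le]
    intro s hs
    obtain ⟨n, hn2, hmem⟩ := hS s hs
    obtain ⟨k, rfl⟩ : ∃ k, n = k + 1 := ⟨n - 1, by omega⟩
    have : P ^ (k + 1) ≤ ⊤ * P := by
      rw [pow_succ]
      exact mul_le_mul' le_top le_rfl
    exact this hmem
  have hIB : I ⊔ B = ⊤ := codisjoint_iff.mp hB.codisjoint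
  rw [hP1]
  refine le_antisymm ?_ ?_
  · -- I ≤ I * P ⊔ B * R
    calc I = ⊤ * R * ⊤ := hI
      _ = ⊤ * R * (1 ⊔ ⊤ * P) := by rw [← htop]
      _ = ⊤ * R * 1 ⊔ ⊤ * R * (⊤ * P) := Submodule.mul_sup _ _ _
      _ = ⊤ * R ⊔ I * P := by rw [mul_one, ← mul_assoc, ← hI]
      _ = (I ⊔ B) * R ⊔ I * P := by rw [hIB]
      _ = I * R ⊔ B * R ⊔ I * P := by rw [Submodule.sup_mul]
      _ ≤ I * P ⊔ B * R := by
          have hIR : I * R ≤ I * P := by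
            calc I * R ≤ I * (⊤ * P) := mul_le_mul' le_rfl hRle
              _ = I * ⊤ * P := (mul_assoc _ _ _).symm
              _ = I * P := by rw [hIT]
          exact sup_le (sup_le (le_trans hIR le_sup_left) le_sup_right)
            le_sup_left
  · -- I * P ⊔ B * R ≤ I
    refine sup_le ?_ ?_
    · calc I * P ≤ I * ⊤ := mul_le_mul' le_rfl le_top
        _ = I := hIT
    · calc B * R ≤ ⊤ * R := mul_le_mul' le_top le_rfl
        _ = ⊤ * R * 1 := (mul_one _).symm
        _ ≤ ⊤ * R * ⊤ := mul_le_mul' le_rfl le_top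
        _ = I := hI.symm
end

section
/- Let d ≥ 2 be a natural number, and let (b_n)_{n≥0}, (r_ℓ)_{ℓ≥0} be sequences of nonnegative reals with b_0 = 1, b_1 = d, r_0 = r_1 = 0, satisfying b_n ≥ d·b_{n-1} − Σ_{j=0}^{n-2} r_{n-j}·b_j for all n ≥ 2. Suppose there exist reals v > 0, c > 0, u > 0 such that r_{n+2} ≤ c·u^n for all n ≥ 0 and (v·d − c)/(v + u) ≥ v. Then b_n ≥ (d − v)^n for all n ≥ 0. -/
theorem golod_shafarevich_growth_bound
    (d : ℕ) (hd : 2 ≤ d) (b r : ℕ → ℝ)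
    (hb0 : b 0 = 1) (hb1 : b 1 = d)
    (hbnn : ∀ n, 0 ≤ b n) (hrnn : ∀ n, 0 ≤ r n)
    (hr0 : r 0 = 0) (hr1 : r 1 = 0)
    (hrec : ∀ n : ℕ,
      b (n + 2) ≥ d * b (n + 1) - ∑ j ∈ Finset.range (n + 1), r (n + 2 - j) * b j)
    (v c u : ℝ) (hv : 0 < v) (hc : 0 < c) (hu : 0 < u)
    (hru : ∀ n : ℕ, r (n + 2) ≤ c * u ^ n)
    (hcond : (v * d - c) / (v + u) ≥ v) :
    ∀ n : ℕ, b n ≥ ((d : ℝ) - v) ^ n := by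
  set w : ℝ := (d : ℝ) - v with hwdef
  have hvu : (0:ℝ) < v + u := by positivity
  have hcle : c ≤ v * (w - u) := by
    have h := (le_div_iff₀ hvu).mp hcond
    nlinarith
  have hwu : u < w := by nlinarith
  have hw0 : (0:ℝ) < w := hu.trans hwu
  -- key: ratio bound
  have key : ∀ n : ℕ, w * b n ≤ b (n + 1) := by
    intro n
    induction n using Nat.strong_induction_on with
    | _ n IH =>
      match n with
      | 0 =>
        rw [hb0, hb1]
        nlinarith
      | Nat.succ m =>
        have step : ∀ i, i ≤ m → w * b i ≤ b (i + 1) := fun i hi => IH i (by omega)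
        -- chain: w^k * b j ≤ b (j+k)
        have pow : ∀ k : ℕ, ∀ j : ℕ, j + k ≤ m + 1 → w ^ k * b j ≤ b (j + k) := by
          intro k
          induction k with
          | zero => intro j hj; simpa using le_refl (b j)
          | succ k ih =>
            intro j hj
            have h1 : w ^ k * b j ≤ b (j + k) := ih j (by omega)
            have h2 : w * b (j + k) ≤ b (j + k + 1) := step (j + k) (by omega)
            have h3 : w * (w ^ k * b j) ≤ w * b (j + k) :=
              mul_le_mul_of_nonneg_left h1 hw0.le
            have : w ^ (k + 1) * b j = w * (w ^ k * b j) := by ring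
            rw [this, show j + (k + 1) = j + k + 1 from by omega]
            linarith
        have hbj : ∀ j, j ≤ m → b j * w ^ (m + 1) ≤ b (m + 1) * w ^ j := by
          intro j hj
          have h1 : w ^ (m + 1 - j) * b j ≤ b (m + 1) := by
            have := pow (m + 1 - j) j (by omega)
            rwa [show j + (m + 1 - j) = m + 1 from by omega] at this
          have h2 : w ^ (m + 1 - j) * b j * w ^ j ≤ b (m + 1) * w ^ j :=
            mul_le_mul_of_nonneg_right h1 (pow_nonneg hw0.le j)
          have h3 : w ^ (m + 1 - j) * w ^ j = w ^ (m + 1) := by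
            rw [← pow_add, show m + 1 - j + j = m + 1 from by omega]
          calc b j * w ^ (m + 1) = w ^ (m + 1 - j) * b j * w ^ j := by
                rw [mul_comm (w ^ (m+1-j)) (b j), mul_assoc, h3]
            _ ≤ b (m + 1) * w ^ j := h2
        set S : ℝ := ∑ j ∈ Finset.range (m + 1), r (m + 2 - j) * b j with hSdef
        set G : ℝ := ∑ j ∈ Finset.range (m + 1), w ^ j * u ^ (m - j) with hGdef
        have hG : G * (w - u) = w ^ (m + 1) - u ^ (m + 1) := by
          have := geom_sum₂_mul w u (m + 1)
          simpa using this
        have hG0 : 0 ≤ G := by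
          apply Finset.sum_nonneg
          intro j hj
          positivity
        have hP : (0:ℝ) < w ^ (m + 1) := pow_pos hw0 (m + 1)
        have h1 : S * w ^ (m + 1) ≤ c * b (m + 1) * G := by
          rw [hSdef, hGdef, Finset.sum_mul, Finset.mul_sum]
          apply Finset.sum_le_sum
          intro j hj
          have hjm : j ≤ m := by
            simpa [Nat.lt_succ_iff] using Finset.mem_range.mp hj
          have hrj : r (m + 2 - j) ≤ c * u ^ (m - j) := by
            have := hru (m - j)
            rwa [show (m - j) + 2 = m + 2 - j from by omega] at this
          have hterm : r (m + 2 - j) * b j ≤ c * u ^ (m - j) * b j :=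
            mul_le_mul_of_nonneg_right hrj (hbnn j)
          calc r (m + 2 - j) * b j * w ^ (m + 1)
              ≤ c * u ^ (m - j) * b j * w ^ (m + 1) :=
                mul_le_mul_of_nonneg_right hterm hP.le
            _ = c * u ^ (m - j) * (b j * w ^ (m + 1)) := by ring
            _ ≤ c * u ^ (m - j) * (b (m + 1) * w ^ j) := by
                apply mul_le_mul_of_nonneg_left (hbj j hjm)
                positivity
            _ = c * b (m + 1) * (w ^ j * u ^ (m - j)) := by ring
        have hS : S ≤ v * b (m + 1) := by
          have hwu' : (0:ℝ) < w - u := by linarith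
          have hcb : (0:ℝ) ≤ c * b (m + 1) := mul_nonneg hc.le (hbnn (m + 1))
          have h2 : c * b (m + 1) * (G * (w - u)) ≤ c * b (m + 1) * w ^ (m + 1) := by
            rw [hG]
            have : (0:ℝ) ≤ u ^ (m + 1) := by positivity
            nlinarith
          have h3 : c * b (m + 1) * w ^ (m + 1) ≤
              v * (w - u) * (b (m + 1) * w ^ (m + 1)) := by
            have := mul_le_mul_of_nonneg_right hcle
              (mul_nonneg (hbnn (m + 1)) hP.le)
            nlinarith
          have h4 : S * w ^ (m + 1) * (w - u) ≤ c * b (m + 1) * (G * (w - u)) := by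
            nlinarith
          have h5 : S * (w ^ (m + 1) * (w - u)) ≤
              v * b (m + 1) * (w ^ (m + 1) * (w - u)) := by nlinarith
          exact le_of_mul_le_mul_right h5 (by positivity)
        have hrec' := hrec m
        have : w * b (m + 1) = (d : ℝ) * b (m + 1) - v * b (m + 1) := by
          rw [hwdef]; ring
        rw [show Nat.succ m + 1 = m + 2 from rfl]
        linarith [hrec']
  intro n
  induction n with
  | zero => simp [hb0]
  | succ n ih =>
    have h1 : w * (w ^ n) ≤ w * b n := mul_le_mul_of_nonneg_left ih hw0.le
    have h2 := key n
    calc w ^ (n + 1) = w * w ^ n := by ring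
      _ ≤ w * b n := h1
      _ ≤ b (n + 1) := h2
end

section
/- Let d ≥ 2 be an integer and ε > 0 with d − 2ε > 1. Let (b_n)_{n≥0}, (r_ℓ)_{ℓ≥0} be sequences of nonnegative reals with b_0 = 1, b_1 = d, r_0 = r_1 = 0, satisfying b_n ≥ d·b_{n-1} − Σ_{j=0}^{n-2} r_{n-j}·b_j for all n ≥ 2, and r_ℓ ≤ ε²·(d−2ε)^{ℓ−2} for all ℓ ≥ 2. Then b_n ≥ (d − ε)^n ≥ 1 for all n ≥ 0. -/
open Finset

private lemma chain_pow_gs (q : ℝ) (hq : 0 ≤ q) (b : ℕ → ℝ) :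
    ∀ m : ℕ, (∀ k < m, q * b k ≤ b (k + 1)) → ∀ j ≤ m, q ^ (m - j) * b j ≤ b m := by
  intro m
  induction m with
  | zero => intro _ j hj; interval_cases j; simp
  | succ m ih =>
    intro h j hj
    rcases Nat.eq_or_lt_of_le hj with h' | h'
    · subst h'; simp
    · have hj' : j ≤ m := by omega
      have h1 : q ^ (m - j) * b j ≤ b m := ih (fun k hk => h k (by omega)) j hj'
      have h2 : q * b m ≤ b (m + 1) := h m (by omega)
      have he : m + 1 - j = (m - j) + 1 := by omega
      rw [he, pow_succ]
      calc q ^ (m - j) * q * b j = q * (q ^ (m - j) * b j) := by ring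
        _ ≤ q * b m := mul_le_mul_of_nonneg_left h1 hq
        _ ≤ b (m + 1) := h2

theorem golod_shafarevich_eps_growth_bound
    (d : ℕ) (hd : 2 ≤ d) (ε : ℝ) (hε : 0 < ε) (hdε : 1 < (d : ℝ) - 2 * ε)
    (b r : ℕ → ℝ)
    (hb0 : b 0 = 1) (hb1 : b 1 = d)
    (hbnn : ∀ n, 0 ≤ b n) (hrnn : ∀ n, 0 ≤ r n)
    (hr0 : r 0 = 0) (hr1 : r 1 = 0)
    (hrec : ∀ n : ℕ,
      b (n + 2) ≥ d * b (n + 1) - ∑ j ∈ Finset.range (n + 1), r (n + 2 - j) * b j)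
    (hrb : ∀ ℓ : ℕ, 2 ≤ ℓ → r ℓ ≤ ε ^ 2 * ((d : ℝ) - 2 * ε) ^ (ℓ - 2)) :
    ∀ n : ℕ, b n ≥ ((d : ℝ) - ε) ^ n ∧ ((d : ℝ) - ε) ^ n ≥ 1 := by
  set q : ℝ := (d : ℝ) - ε with hqdef
  set c : ℝ := (d : ℝ) - 2 * ε with hcdef
  have hq1 : 1 < q := by simp only [hqdef]; linarith
  have hq0 : (0:ℝ) < q := lt_trans one_pos hq1
  have hc0 : (0:ℝ) < c := lt_trans one_pos hdε
  have hcq : c < q := by simp only [hqdef, hcdef]; linarith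
  -- main induction: b (k+1) ≥ q * b k
  have main : ∀ n, ∀ k ≤ n, q * b k ≤ b (k + 1) := by
    intro n
    induction n with
    | zero =>
      intro k hk; interval_cases k
      rw [hb0, hb1]; simp only [hqdef]; linarith
    | succ n ih =>
      intro k hk
      rcases Nat.lt_succ_iff_lt_or_eq.mp (Nat.lt_succ_of_le hk) with h | h
      · exact ih k (Nat.lt_succ_iff.mp h)
      · subst h
        have chainh := chain_pow_gs q hq0.le b (n + 1)
          (fun k hk => ih k (Nat.lt_succ_iff.mp hk))
        set x : ℝ := c / q with hxdef
        have hx0 : 0 ≤ x := le_of_lt (div_pos hc0 hq0)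
        have hx1 : x < 1 := (div_lt_one hq0).mpr hcq
        set B : ℝ := b (n + 1) with hBdef
        have hB0 : 0 ≤ B := hbnn _
        -- termwise bound
        have hterm : ∀ j ∈ range (n + 1),
            r (n + 2 - j) * b j ≤ ε ^ 2 * B / q * x ^ (n - j) := by
          intro j hj
          have hjn : j ≤ n := Nat.lt_succ_iff.mp (mem_range.mp hj)
          have h1 : r (n + 2 - j) ≤ ε ^ 2 * c ^ (n - j) := by
            have := hrb (n + 2 - j) (by omega)
            have he : n + 2 - j - 2 = n - j := by omega
            rwa [he] at this
          have h2 : b j ≤ B / q ^ (n + 1 - j) := by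
            rw [le_div_iff₀ (pow_pos hq0 _), mul_comm]
            exact chainh j (by omega)
          have h3 : r (n + 2 - j) * b j ≤ ε ^ 2 * c ^ (n - j) * (B / q ^ (n + 1 - j)) :=
            mul_le_mul h1 h2 (hbnn j) (by positivity)
          have he2 : n + 1 - j = (n - j) + 1 := by omega
          calc r (n + 2 - j) * b j ≤ ε ^ 2 * c ^ (n - j) * (B / q ^ (n + 1 - j)) := h3
            _ = ε ^ 2 * B / q * x ^ (n - j) := by
                rw [he2, hxdef, div_pow, pow_succ]
                field_simp
                ring
        have hsum1 : ∑ j ∈ range (n + 1), r (n + 2 - j) * b j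
            ≤ ∑ j ∈ range (n + 1), ε ^ 2 * B / q * x ^ (n - j) :=
          Finset.sum_le_sum hterm
        have hrefl : ∑ j ∈ range (n + 1), x ^ (n - j) = ∑ j ∈ range (n + 1), x ^ j := by
          rw [← Finset.sum_range_reflect]
          apply Finset.sum_congr rfl
          intro j hj
          rw [Finset.mem_range] at hj
          congr 1
          omega
        have hgeom : ∑ j ∈ range (n + 1), x ^ j ≤ 1 / (1 - x) := by
          rw [le_div_iff₀ (by linarith : (0:ℝ) < 1 - x)]
          have hxp : 0 ≤ x ^ (n + 1) := pow_nonneg hx0 _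
          calc (∑ j ∈ range (n + 1), x ^ j) * (1 - x)
              = -((∑ j ∈ range (n + 1), x ^ j) * (x - 1)) := by ring
            _ = -(x ^ (n + 1) - 1) := by rw [geom_sum_mul]
            _ ≤ 1 := by linarith
        have hone : 1 / (1 - x) = q / ε := by
          have : 1 - x = ε / q := by
            rw [eq_div_iff hq0.ne', sub_mul, hxdef, div_mul_cancel₀ _ hq0.ne', hcdef, hqdef]
            ring
          rw [this, one_div_div]
        have hsum : ∑ j ∈ range (n + 1), r (n + 2 - j) * b j ≤ ε * B := by
          calc ∑ j ∈ range (n + 1), r (n + 2 - j) * b j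
              ≤ ∑ j ∈ range (n + 1), ε ^ 2 * B / q * x ^ (n - j) := hsum1
            _ = ε ^ 2 * B / q * ∑ j ∈ range (n + 1), x ^ (n - j) := by
                rw [Finset.mul_sum]
            _ = ε ^ 2 * B / q * ∑ j ∈ range (n + 1), x ^ j := by rw [hrefl]
            _ ≤ ε ^ 2 * B / q * (q / ε) := by
                apply mul_le_mul_of_nonneg_left _ (by positivity)
                rw [← hone]; exact hgeom
            _ = ε * B := by field_simp
        have := hrec n
        have : b (n + 2) ≥ (d : ℝ) * B - ε * B := by
          have h4 := hrec n
          calc b (n + 2) ≥ (d : ℝ) * b (n + 1) - ∑ j ∈ range (n + 1), r (n + 2 - j) * b j := h4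
            _ ≥ (d : ℝ) * B - ε * B := by
                rw [hBdef]; linarith
        calc q * b (n + 1) = (d : ℝ) * B - ε * B := by rw [hqdef, hBdef]; ring
          _ ≤ b (n + 2) := this
  -- conclude
  have hpow : ∀ n, q ^ n ≤ b n := by
    intro n
    induction n with
    | zero => rw [hb0]; simp
    | succ n ih =>
      calc q ^ (n + 1) = q * q ^ n := by ring
        _ ≤ q * b n := mul_le_mul_of_nonneg_left ih hq0.le
        _ ≤ b (n + 1) := main n n le_rfl
  intro n
  exact ⟨hpow n, one_le_pow₀ hq1.le⟩
end

section
/- Let d ≥ 2, and let v, c, u > 0 be reals with (v·d − c)/(v + u) ≥ v. Let (b_n) be nonnegative reals with b_0 = 1, b_1 = d, and (r_ℓ) nonnegative with r_{n+2} ≤ c·u^n for all n ≥ 0, satisfying b_{n+2} ≥ d·b_{n+1} − Σ_{j=0}^{n} r_{n+2−j}·b_j for all n ≥ 0. Then for all n ≥ 0: v·b_{n+1} ≥ Σ_{j=0}^{n} c·u^{n−j}·b_j. -/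
theorem golod_key_inductive_estimate
    (d : ℕ) (hd : 2 ≤ d) (v c u : ℝ) (hv : 0 < v) (hc : 0 < c) (hu : 0 < u)
    (hcond : (v * d - c) / (v + u) ≥ v)
    (b r : ℕ → ℝ)
    (hb0 : b 0 = 1) (hb1 : b 1 = d)
    (hbnn : ∀ n, 0 ≤ b n) (hrnn : ∀ n, 0 ≤ r n)
    (hru : ∀ n : ℕ, r (n + 2) ≤ c * u ^ n)
    (hrec : ∀ n : ℕ,
      b (n + 2) ≥ d * b (n + 1) - ∑ j ∈ Finset.range (n + 1), r (n + 2 - j) * b j) :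
    ∀ n : ℕ, v * b (n + 1) ≥ ∑ j ∈ Finset.range (n + 1), c * u ^ (n - j) * b j := by
  have hvu : 0 < v + u := by linarith
  have hvd : v * d - c ≥ v * (v + u) := by
    calc v * (v + u) ≤ ((v * d - c) / (v + u)) * (v + u) := by
          apply mul_le_mul_of_nonneg_right hcond (le_of_lt hvu)
      _ = v * d - c := div_mul_cancel₀ _ (ne_of_gt hvu)
  intro n
  induction n with
  | zero =>
    simp [hb0, hb1]
    nlinarith
  | succ n ih =>
    set S := ∑ j ∈ Finset.range (n + 1), c * u ^ (n - j) * b j with hS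
    have hrb : ∑ j ∈ Finset.range (n + 1), r (n + 2 - j) * b j ≤ S := by
      apply Finset.sum_le_sum
      intro j hj
      have hjn : j ≤ n := Nat.lt_succ_iff.mp (Finset.mem_range.mp hj)
      have h2 : n + 2 - j = (n - j) + 2 := by omega
      rw [h2]
      exact mul_le_mul_of_nonneg_right (hru (n - j)) (hbnn j)
    have hb2 : b (n + 2) ≥ d * b (n + 1) - S := by linarith [hrec n]
    have hsum : ∑ j ∈ Finset.range (n + 2), c * u ^ (n + 1 - j) * b j
        = u * S + c * b (n + 1) := by
      rw [Finset.sum_range_succ]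
      have h1 : ∀ j ∈ Finset.range (n + 1),
          c * u ^ (n + 1 - j) * b j = u * (c * u ^ (n - j) * b j) := by
        intro j hj
        have hjn : j ≤ n := Nat.lt_succ_iff.mp (Finset.mem_range.mp hj)
        have h2 : n + 1 - j = (n - j) + 1 := by omega
        rw [h2]; ring
      rw [Finset.sum_congr rfl h1, ← Finset.mul_sum]
      simp [hS]
    rw [hsum]
    have hSnn : 0 ≤ S := by
      apply Finset.sum_nonneg
      intro j hj
      exact mul_nonneg (mul_nonneg (le_of_lt hc) (pow_nonneg (le_of_lt hu) _)) (hbnn j)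
    nlinarith [hbnn (n + 1), mul_le_mul_of_nonneg_left hb2 (le_of_lt hv),
      mul_le_mul_of_nonneg_right hvd (hbnn (n + 1)),
      mul_le_mul_of_nonneg_left ih (le_of_lt hvu)]
end

section
/- Let F be a field, d ≥ 2, T = F⟨x₁,…,x_d⟩, c a positive integer, q = d + d² + ⋯ + d^c, and M₁,…,M_q the list of all nonconstant monomials in x₁,…,x_d of degree at most c. Let n be a positive integer and I ⊆ T a two-sided ideal containing s_j(M₁,…,M_q) for every weakly increasing tuple j ∈ J(q,n), where s_j is the order-symmetric polynomial. Then for every polynomial g ∈ T with zero constant term and deg g ≤ c, we have g^n ∈ I. -/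
open scoped Classical

/-- The set of nonconstant monomials of degree at most `c`. -/
def freeAlgMonomials (F : Type*) [Field F] (d c : ℕ) : Set (FreeAlgebra F (Fin d)) :=
  {x | ∃ k : ℕ, 1 ≤ k ∧ k ≤ c ∧ ∃ w : Fin k → Fin d,
    x = (List.ofFn fun i => FreeAlgebra.ι F (w i)).prod}

lemma expand_pow_aux (F : Type*) [Field F] {A : Type*} [Ring A] [Algebra F A]
    (q : ℕ) (M : Fin q → A) (a : Fin q → F) :
    ∀ n : ℕ, (∑ j, a j • M j) ^ n =
      ∑ i : Fin n → Fin q, (∏ k, a (i k)) • (List.ofFn fun k => M (i k)).prod := by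
  intro n
  induction n with
  | zero => simp
  | succ n ih =>
    rw [pow_succ', ih, Finset.sum_mul_sum]
    rw [← Equiv.sum_comp (Fin.consEquiv fun _ : Fin (n + 1) => Fin q), Fintype.sum_prod_type]
    refine Finset.sum_congr rfl fun x _ => Finset.sum_congr rfl fun i _ => ?_
    simp only [Fin.prod_univ_succ, List.ofFn_succ, List.prod_cons,
      Fin.consEquiv_apply, Fin.cons_zero, Fin.cons_succ, smul_mul_smul_comm]

theorem power_in_ideal_of_order_symmetric
    (F : Type*) [Field F] (d : ℕ) (hd : 2 ≤ d)
    (c : ℕ) (hc : 1 ≤ c) (q : ℕ) (hq : q = ∑ k ∈ Finset.Icc 1 c, d ^ k)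
    (M : Fin q → FreeAlgebra F (Fin d))
    (hMinj : Function.Injective M)
    (hMran : Set.range M = freeAlgMonomials F d c)
    (n : ℕ) (hn : 1 ≤ n)
    (I : Submodule F (FreeAlgebra F (Fin d)))
    (hIl : ∀ a : FreeAlgebra F (Fin d), ∀ x ∈ I, a * x ∈ I)
    (hIr : ∀ a : FreeAlgebra F (Fin d), ∀ x ∈ I, x * a ∈ I)
    (hs : ∀ j : Fin n → Fin q, Monotone j →
      (∑ i ∈ Finset.univ.filter
          (fun i : Fin n → Fin q => ∃ π : Equiv.Perm (Fin n), i = j ∘ ⇑π),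
        (List.ofFn fun k => M (i k)).prod) ∈ I)
    (g : FreeAlgebra F (Fin d))
    (hg : g ∈ ⨆ k ∈ Finset.Icc 1 c, freeAlgGrade F d k) :
    g ^ n ∈ I := by
  -- Step 1: g lies in the span of the monomials M.
  have hsub : (⨆ k ∈ Finset.Icc 1 c, freeAlgGrade F d k) ≤
      Submodule.span F (Set.range M) := by
    refine iSup_le fun k => iSup_le fun hk => ?_
    rw [freeAlgGrade, Submodule.span_pow]
    refine Submodule.span_mono fun x hx => ?_
    rw [Set.mem_pow] at hx
    obtain ⟨f, hf⟩ := hx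
    rw [hMran]
    rw [Finset.mem_Icc] at hk
    choose w hw using fun i => (f i).2
    refine ⟨k, hk.1, hk.2, w, ?_⟩
    rw [← hf]
    congr 1
    ext i
    simp [hw]
  obtain ⟨a, ha⟩ := (Submodule.mem_span_range_iff_exists_fun F).1 (hsub hg)
  rw [← ha, expand_pow_aux]
  -- Step 2: regroup the sum by sorted representatives.
  have hmaps : ∀ i : Fin n → Fin q, i ∈ Finset.univ →
      i ∘ Tuple.sort i ∈ Finset.univ.filter (fun j : Fin n → Fin q => Monotone j) := by
    intro i _
    simp [Tuple.monotone_sort i]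
  rw [← Finset.sum_fiberwise_of_maps_to hmaps
    (fun i => (∏ k, a (i k)) • (List.ofFn fun k => M (i k)).prod)]
  refine Submodule.sum_mem I fun j hj => ?_
  rw [Finset.mem_filter] at hj
  have hjm : Monotone j := hj.2
  have hfiber : (Finset.univ.filter fun i : Fin n → Fin q => i ∘ Tuple.sort i = j) =
      Finset.univ.filter (fun i : Fin n → Fin q => ∃ π : Equiv.Perm (Fin n), i = j ∘ ⇑π) := by
    ext i
    simp only [Finset.mem_filter, Finset.mem_univ, true_and]
    constructor
    · intro h
      refine ⟨(Tuple.sort i)⁻¹, ?_⟩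
      rw [← h]
      ext x
      simp
    · rintro ⟨π, rfl⟩
      rw [Tuple.comp_perm_comp_sort_eq_comp_sort,
        Tuple.sort_eq_refl_iff_monotone.2 hjm]
      rfl
  have hcoef : ∀ i ∈ Finset.univ.filter
      (fun i : Fin n → Fin q => ∃ π : Equiv.Perm (Fin n), i = j ∘ ⇑π),
      (∏ k, a (i k)) = ∏ k, a (j k) := by
    intro i hi
    rw [Finset.mem_filter] at hi
    obtain ⟨π, rfl⟩ := hi.2
    exact Equiv.prod_comp π fun k => a (j k)
  rw [hfiber, Finset.sum_congr rfl fun i hi => by rw [hcoef i hi], ← Finset.smul_sum]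
  exact Submodule.smul_mem I _ (hs j hjm)
end

section
/- Let F be a field and d ≥ 2, and let ε > 0 satisfy d − 2ε > 1. Then there exists a sequence f₁, f₂, … of homogeneous polynomials in T = F⟨x₁,…,x_d⟩, each of degree ≥ 2, such that: (1) for every g ∈ T with zero constant term there exists n with g^n in the two-sided ideal I generated by the f_j; and (2) for every ℓ ≥ 2, the number r_ℓ of f_j of degree ℓ satisfies r_ℓ ≤ ε²·(d−2ε)^{ℓ−2}. -/
/-- The subspace of polynomials with zero constant term (degrees ≥ 1). -/
noncomputable def freeAlgAug (F : Type*) [Field F] (d : ℕ) :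
    Submodule F (FreeAlgebra F (Fin d)) :=
  ⨆ k : ℕ, freeAlgGrade F d (k + 1)

namespace GS

open Submodule

variable (F : Type*) [Field F]

abbrev Idx (d m : ℕ) := Σ k : Fin m, (Fin (k.1 + 1) → Fin d)

/-- word of length n from a function -/
noncomputable def monoW (d n : ℕ) (v : Fin n → Fin d) : FreeAlgebra F (Fin d) :=
  (List.ofFn fun j => FreeAlgebra.ι F (v j)).prod

noncomputable def mono {d m : ℕ} (i : Idx d m) : FreeAlgebra F (Fin d) :=
  monoW F d (i.1.1 + 1) i.2

def wlen {d m : ℕ} (i : Idx d m) : ℕ := i.1.1 + 1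

lemma grade_eq_span (d n : ℕ) :
    freeAlgGrade F d n = span F (Set.range (monoW F d n)) := by
  induction n with
  | zero =>
    rw [freeAlgGrade, pow_zero, Submodule.one_eq_span]
    congr 1
    ext x
    constructor
    · rintro rfl; exact ⟨Fin.elim0, by simp [monoW]⟩
    · rintro ⟨v, rfl⟩; simp [monoW]
  | succ n ih =>
    rw [freeAlgGrade, pow_succ', ← freeAlgGrade, ih, Submodule.span_mul_span]
    congr 1
    ext x
    constructor
    · rintro ⟨_, ⟨i, rfl⟩, _, ⟨v, rfl⟩, rfl⟩
      refine ⟨Fin.cons i v, ?_⟩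
      simp [monoW, List.ofFn_succ, Fin.cons_zero, Fin.cons_succ]
    · rintro ⟨v, rfl⟩
      refine ⟨_, ⟨v 0, rfl⟩, _, ⟨v ∘ Fin.succ, rfl⟩, ?_⟩
      simp [monoW, List.ofFn_succ, Function.comp]

lemma mono_mem_grade {d m : ℕ} (i : Idx d m) : mono F i ∈ freeAlgGrade F d (wlen i) := by
  rw [grade_eq_span]; exact subset_span ⟨i.2, rfl⟩

lemma listProd_mem_grade {d m : ℕ} (l : List (Idx d m)) :
    (l.map (mono F)).prod ∈ freeAlgGrade F d (l.map wlen).sum := by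
  induction l with
  | nil =>
    simp only [List.map_nil, List.prod_nil, List.sum_nil]
    rw [freeAlgGrade, pow_zero]
    exact Submodule.one_le.mp le_rfl
  | cons i l ih =>
    simp only [List.map_cons, List.prod_cons, List.sum_cons]
    rw [freeAlgGrade, pow_add]
    exact Submodule.mul_mem_mul (mono_mem_grade F i) ih

lemma sum_pow_expand {A : Type*} [Ring A] [Algebra F A] {α : Type*} [Fintype α]
    (c : α → F) (v : α → A) (n : ℕ) :
    (∑ i, c i • v i) ^ n
      = ∑ σ : Fin n → α, (∏ j, c (σ j)) • (List.ofFn fun j => v (σ j)).prod := by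
  induction n with
  | zero => simp [Finset.sum_unique_nonempty]
  | succ n ih =>
    rw [pow_succ', ih, Finset.sum_mul_sum]
    rw [← ((Fin.consEquiv fun _ => α).sum_comp
        fun σ => (∏ j, c (σ j)) • (List.ofFn fun j => v (σ j)).prod), Fintype.sum_prod_type]
    refine Finset.sum_congr rfl fun a _ => Finset.sum_congr rfl fun σ _ => ?_
    show (c a • v a) * _ = _
    rw [smul_mul_smul_comm]
    congr 1
    · rw [Fin.prod_univ_succ]
      simp [Fin.consEquiv]
    · simp [Fin.consEquiv, List.ofFn_succ, Fin.cons_succ, Fin.cons_zero]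

noncomputable def rel (d m n : ℕ) (M : Multiset (Idx d m)) : FreeAlgebra F (Fin d) :=
  ∑ σ ∈ Finset.univ.filter
      (fun σ : Fin n → Idx d m => (↑(List.ofFn σ) : Multiset (Idx d m)) = M),
    (List.ofFn fun j => mono F (σ j)).prod

lemma rel_mem_grade (d m n : ℕ) (M : Multiset (Idx d m)) :
    rel F d m n M ∈ freeAlgGrade F d (M.map wlen).sum := by
  refine Submodule.sum_mem _ fun σ hσ => ?_
  rw [Finset.mem_filter] at hσ
  have h1 : (List.ofFn fun j => mono F (σ j)) = (List.ofFn σ).map (mono F) := by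
    rw [List.map_ofFn]; rfl
  have h2 : (M.map wlen).sum = ((List.ofFn σ).map wlen).sum := by
    rw [← hσ.2]; simp
  rw [h1, h2]
  exact listProd_mem_grade F _

lemma pow_mem_span_rel (d m : ℕ) (c : Idx d m → F) (n : ℕ) :
    (∑ i, c i • mono F i) ^ n ∈
      span F {x | ∃ M : Multiset (Idx d m), Multiset.card M = n ∧ x = rel F d m n M} := by
  rw [sum_pow_expand]
  rw [← Finset.sum_fiberwise_of_maps_to
      (g := fun σ : Fin n → Idx d m => (↑(List.ofFn σ) : Multiset (Idx d m)))
      (t := Finset.univ.image fun σ : Fin n → Idx d m => (↑(List.ofFn σ) : Multiset (Idx d m)))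
      (fun σ _ => Finset.mem_image_of_mem _ (Finset.mem_univ σ))]
  refine Submodule.sum_mem _ fun M hM => ?_
  have hsum : ∑ σ ∈ Finset.univ.filter
      (fun σ : Fin n → Idx d m => (↑(List.ofFn σ) : Multiset (Idx d m)) = M),
      (∏ j, c (σ j)) • (List.ofFn fun j => mono F (σ j)).prod
      = (M.map c).prod • rel F d m n M := by
    rw [rel, Finset.smul_sum]
    refine Finset.sum_congr rfl fun σ hσ => ?_
    rw [Finset.mem_filter] at hσ
    congr 1
    rw [← hσ.2]
    simp [← List.prod_ofFn (f := fun j => c (σ j)), List.map_ofFn]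
    rfl
  rw [hsum]
  refine Submodule.smul_mem _ _ (Submodule.subset_span ?_)
  obtain ⟨σ, -, rfl⟩ := Finset.mem_image.mp hM
  exact ⟨_, by simp, rfl⟩

/-! ### Combinatorial parameters -/

noncomputable def csym (d m n : ℕ) : ℕ := Fintype.card (Sym (Idx d m) n)

lemma exists_block (d : ℕ) (hd : 2 ≤ d) (ε : ℝ) (hε : 0 < ε)
    (hdε : 1 < (d : ℝ) - 2 * ε) (m a : ℕ) (hm : 1 ≤ m) :
    ∃ n : ℕ, a < n ∧ ((csym d m n : ℝ) + 1 ≤ ε ^ 2 * ((d : ℝ) - 2 * ε) ^ (n - 2)) := by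
  set cR : ℝ := (d : ℝ) - 2 * ε with hcR
  have hc1 : (1 : ℝ) < cR := hdε
  have hc0 : (0 : ℝ) < cR := lt_trans one_pos hc1
  set N : ℕ := Fintype.card (Idx d m) with hN
  have hN1 : 1 ≤ N := by
    have : Nonempty (Idx d m) :=
      ⟨⟨⟨0, hm⟩, fun _ => ⟨0, lt_of_lt_of_le (by norm_num) hd⟩⟩⟩
    exact Fintype.card_pos
  have hr : ‖cR⁻¹‖ < 1 := by
    rw [Real.norm_eq_abs, abs_of_pos (inv_pos.mpr hc0)]
    exact inv_lt_one_of_one_lt₀ hc1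
  have hsum := summable_pow_mul_geometric_of_norm_lt_one (R := ℝ) N hr
  have hten := hsum.tendsto_atTop_zero
  have hδ : (0 : ℝ) < ε ^ 2 / (cR ^ 2 * (2 ^ N + 1)) := by positivity
  have hev := hten.eventually_lt_const hδ
  obtain ⟨n, hn1, hn2⟩ := (hev.and (Filter.eventually_ge_atTop (max (a + 1) (max N 2)))).exists
  have hna : a < n := lt_of_lt_of_le (Nat.lt_succ_self a) (le_trans (le_max_left _ _) hn2)
  have hnN : N ≤ n := le_trans (le_trans (le_max_left _ _) (le_max_right _ _)) hn2
  have hn2' : 2 ≤ n := le_trans (le_trans (le_max_right _ _) (le_max_right _ _)) hn2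
  refine ⟨n, hna, ?_⟩
  have hcs : csym d m n ≤ (N + n) ^ N := by
    have h1 : csym d m n = (N + n - 1).choose n := by
      rw [csym, Sym.card_sym_eq_choose]
    have h2 : (N + n - 1).choose n = (N + n - 1).choose (N - 1) := by
      rw [← Nat.choose_symm (by omega : n ≤ N + n - 1)]
      congr 1
      omega
    calc csym d m n = (N + n - 1).choose (N - 1) := by rw [h1, h2]
      _ ≤ (N + n - 1) ^ (N - 1) := Nat.choose_le_pow _ _
      _ ≤ (N + n) ^ (N - 1) := Nat.pow_le_pow_left (by omega) _
      _ ≤ (N + n) ^ N := Nat.pow_le_pow_right (by omega) (by omega)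
  have hreal : ((csym d m n : ℝ)) + 1 ≤ (2 ^ N + 1) * (n : ℝ) ^ N := by
    have h1 : ((csym d m n : ℝ)) ≤ ((N + n : ℕ) : ℝ) ^ N := by
      calc ((csym d m n : ℝ)) ≤ (((N + n) ^ N : ℕ) : ℝ) := Nat.cast_le.mpr hcs
        _ = ((N + n : ℕ) : ℝ) ^ N := by push_cast; ring
    have h2 : ((N + n : ℕ) : ℝ) ≤ 2 * (n : ℝ) := by
      push_cast
      have : (N : ℝ) ≤ (n : ℝ) := Nat.cast_le.mpr hnN
      linarith
    have h3 : ((N + n : ℕ) : ℝ) ^ N ≤ (2 * (n : ℝ)) ^ N :=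
      pow_le_pow_left₀ (by positivity) h2 N
    have h4 : (1 : ℝ) ≤ (n : ℝ) ^ N :=
      one_le_pow₀ (by exact_mod_cast Nat.one_le_iff_ne_zero.mpr (by omega))
    calc ((csym d m n : ℝ)) + 1 ≤ (2 * (n : ℝ)) ^ N + (n : ℝ) ^ N := by
          linarith [h1.trans h3]
      _ = (2 ^ N + 1) * (n : ℝ) ^ N := by rw [mul_pow]; ring
  have hkey : (n : ℝ) ^ N * cR⁻¹ ^ n < ε ^ 2 / (cR ^ 2 * (2 ^ N + 1)) := hn1
  have hcn : (0 : ℝ) < cR ^ n := pow_pos hc0 n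
  have hpow : cR ^ (n - 2) * cR ^ 2 = cR ^ n := by
    rw [← pow_add]
    congr 1
    omega
  have h2N : (0:ℝ) < 2 ^ N + 1 := by positivity
  have : (2 ^ N + 1) * (n : ℝ) ^ N < ε ^ 2 * cR ^ (n - 2) := by
    have h5 : (n : ℝ) ^ N < ε ^ 2 / (cR ^ 2 * (2 ^ N + 1)) * cR ^ n := by
      have h6 := mul_lt_mul_of_pos_right hkey hcn
      have h7 : cR⁻¹ ^ n * cR ^ n = 1 := by
        rw [← mul_pow, inv_mul_cancel₀ (ne_of_gt hc0), one_pow]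
      calc (n : ℝ) ^ N = (n : ℝ) ^ N * cR⁻¹ ^ n * cR ^ n := by
            rw [mul_assoc, h7, mul_one]
        _ < _ := h6
    calc (2 ^ N + 1) * (n : ℝ) ^ N
        < (2 ^ N + 1) * (ε ^ 2 / (cR ^ 2 * (2 ^ N + 1)) * cR ^ n) := by
          exact (mul_lt_mul_iff_right₀ h2N).mpr h5
      _ = ε ^ 2 * cR ^ (n - 2) := by
          rw [← hpow]
          field_simp
  linarith [hreal]

noncomputable def nseq (d : ℕ) (ε : ℝ) : ℕ → ℕ
  | 0 => 2
  | m + 1 =>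
    letI := Classical.propDecidable
    if h : ∃ n : ℕ, max (m * nseq d ε m) (nseq d ε m) < n ∧
        ((csym d (m + 1) n : ℝ) + 1 ≤ ε ^ 2 * ((d : ℝ) - 2 * ε) ^ (n - 2)) then
      h.choose
    else 0

lemma nseq_zero (d : ℕ) (ε : ℝ) : nseq d ε 0 = 2 := rfl

variable {d : ℕ} {ε : ℝ}

lemma nseq_spec (hd : 2 ≤ d) (hε : 0 < ε) (hdε : 1 < (d : ℝ) - 2 * ε) (m : ℕ) :
    max (m * nseq d ε m) (nseq d ε m) < nseq d ε (m + 1) ∧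
      ((csym d (m + 1) (nseq d ε (m + 1)) : ℝ) + 1
        ≤ ε ^ 2 * ((d : ℝ) - 2 * ε) ^ (nseq d ε (m + 1) - 2)) := by
  have h := exists_block d hd ε hε hdε (m + 1) (max (m * nseq d ε m) (nseq d ε m)) (by omega)
  rw [nseq, dif_pos h]
  exact h.choose_spec

lemma nseq_lt_succ (hd : 2 ≤ d) (hε : 0 < ε) (hdε : 1 < (d : ℝ) - 2 * ε) (m : ℕ) :
    nseq d ε m < nseq d ε (m + 1) :=
  lt_of_le_of_lt (le_max_right _ _) (nseq_spec hd hε hdε m).1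

lemma nseq_mul_lt_succ (hd : 2 ≤ d) (hε : 0 < ε) (hdε : 1 < (d : ℝ) - 2 * ε) (m : ℕ) :
    m * nseq d ε m < nseq d ε (m + 1) :=
  lt_of_le_of_lt (le_max_left _ _) (nseq_spec hd hε hdε m).1

lemma nseq_mono (hd : 2 ≤ d) (hε : 0 < ε) (hdε : 1 < (d : ℝ) - 2 * ε) :
    StrictMono (nseq d ε) :=
  strictMono_nat_of_lt_succ (nseq_lt_succ hd hε hdε)

lemma nseq_ge (hd : 2 ≤ d) (hε : 0 < ε) (hdε : 1 < (d : ℝ) - 2 * ε) (m : ℕ) :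
    m + 2 ≤ nseq d ε m := by
  induction m with
  | zero => simp [nseq_zero]
  | succ m ih => have := nseq_lt_succ hd hε hdε m; omega

noncomputable def Kc (d : ℕ) (ε : ℝ) : ℕ :=
  letI := Classical.propDecidable
  if h : ∃ K : ℕ, 2 ≤ K ∧ (1 : ℝ) ≤ ε ^ 2 * ((d : ℝ) - 2 * ε) ^ (K - 2) then h.choose
  else 2

lemma Kc_ge_two : 2 ≤ Kc d ε := by
  rw [Kc]
  split
  · next h => exact h.choose_spec.1
  · exact le_rfl

lemma Kc_exists (hε : 0 < ε) (hdε : 1 < (d : ℝ) - 2 * ε) :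
    ∃ K : ℕ, 2 ≤ K ∧ (1 : ℝ) ≤ ε ^ 2 * ((d : ℝ) - 2 * ε) ^ (K - 2) := by
  obtain ⟨j, hj⟩ := pow_unbounded_of_one_lt ((1:ℝ) / ε ^ 2) hdε
  refine ⟨j + 2, by omega, ?_⟩
  have hε2 : (0:ℝ) < ε ^ 2 := by positivity
  have : (1:ℝ) / ε ^ 2 ≤ ((d : ℝ) - 2 * ε) ^ (j + 2 - 2) := by
    simpa using le_of_lt hj
  calc (1:ℝ) = ε ^ 2 * (1 / ε ^ 2) := by field_simp
    _ ≤ ε ^ 2 * ((d : ℝ) - 2 * ε) ^ (j + 2 - 2) :=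
        mul_le_mul_of_nonneg_left this (le_of_lt hε2)
    _ = _ := rfl

lemma Kc_spec (hε : 0 < ε) (hdε : 1 < (d : ℝ) - 2 * ε) :
    (1 : ℝ) ≤ ε ^ 2 * ((d : ℝ) - 2 * ε) ^ (Kc d ε - 2) := by
  have h := Kc_exists hε hdε
  rw [Kc, dif_pos h]
  exact h.choose_spec.2

/-! ### The enumeration -/

abbrev J (d : ℕ) (ε : ℝ) : Type := Σ m : ℕ, Sym (Idx d m) (nseq d ε m)

noncomputable instance : Encodable (J d ε) :=
  letI : ∀ m : ℕ, Encodable (Sym (Idx d m) (nseq d ε m)) := fun m => Fintype.toEncodable _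
  Sigma.encodable

noncomputable def degJ (j : J d ε) : ℕ := (Multiset.map wlen (↑j.2 : Multiset (Idx d j.1))).sum

noncomputable def fseq (d : ℕ) (ε : ℝ) (k : ℕ) : FreeAlgebra F (Fin d) :=
  match Encodable.decode₂ (J d ε) k with
  | some j => rel F d j.1 (nseq d ε j.1) ↑j.2
  | none => 0

noncomputable def degseq (d : ℕ) (ε : ℝ) (k : ℕ) : ℕ :=
  match Encodable.decode₂ (J d ε) k with
  | some j => degJ j
  | none => Kc d ε + k

lemma multiset_sum_bounds (s : Multiset ℕ) (m : ℕ) (h : ∀ x ∈ s, 1 ≤ x ∧ x ≤ m) :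
    Multiset.card s ≤ s.sum ∧ s.sum ≤ Multiset.card s * m := by
  induction s using Multiset.induction_on with
  | empty => simp
  | cons a s ih =>
    have ha := h a (Multiset.mem_cons_self a s)
    have ih' := ih fun x hx => h x (Multiset.mem_cons_of_mem hx)
    simp only [Multiset.sum_cons, Multiset.card_cons]
    constructor
    · omega
    · have : (Multiset.card s + 1) * m = Multiset.card s * m + m := by ring
      omega

lemma degJ_bounds (j : J d ε) :
    nseq d ε j.1 ≤ degJ j ∧ degJ j ≤ j.1 * nseq d ε j.1 := by
  rcases j with ⟨m, M⟩
  have hb := multiset_sum_bounds (Multiset.map wlen (↑M : Multiset (Idx d m))) m ?_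
  · have hcard : Multiset.card (Multiset.map wlen (↑M : Multiset (Idx d m))) = nseq d ε m := by
      rw [Multiset.card_map, Sym.card_coe]
    constructor
    · have := hb.1; rw [hcard] at this; exact this
    · have := hb.2; rw [hcard] at this
      rw [mul_comm] at this; exact this
  · rintro x hx
    obtain ⟨i, -, rfl⟩ := Multiset.mem_map.mp hx
    exact ⟨Nat.le_add_left 1 _, by have := i.1.2; simp [wlen]⟩

lemma J_fst_pos (j : J d ε) : 1 ≤ j.1 := by
  rcases j with ⟨m, M⟩
  rcases Nat.eq_zero_or_pos m with rfl | h
  · exfalso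
    haveI : IsEmpty (Idx d 0) := ⟨fun i => i.1.elim0⟩
    have h0 : (↑M : Multiset (Idx d 0)) = 0 :=
      Multiset.eq_zero_of_forall_notMem fun x hx => (IsEmpty.false x).elim
    have hc : Multiset.card (↑M : Multiset (Idx d 0)) = nseq d ε 0 := Sym.card_coe
    rw [h0, nseq_zero] at hc
    simp at hc
  · exact h

end GS

theorem golod_shafarevich_sequences_exist
    (F : Type*) [Field F] (d : ℕ) (hd : 2 ≤ d)
    (ε : ℝ) (hε : 0 < ε) (hdε : 1 < (d : ℝ) - 2 * ε) :
    ∃ (f : ℕ → FreeAlgebra F (Fin d)) (deg : ℕ → ℕ),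
      (∀ j, 2 ≤ deg j ∧ f j ∈ freeAlgGrade F d (deg j)) ∧
      (∀ g ∈ freeAlgAug F d, ∃ n : ℕ, 1 ≤ n ∧
        g ^ n ∈ Submodule.span F {x | ∃ j a b, x = a * f j * b}) ∧
      (∀ ℓ : ℕ, 2 ≤ ℓ → {j | deg j = ℓ}.Finite ∧
        ({j | deg j = ℓ}.ncard : ℝ) ≤ ε ^ 2 * ((d : ℝ) - 2 * ε) ^ (ℓ - 2)) := by
  classical
  refine ⟨GS.fseq F d ε, GS.degseq d ε, ?_, ?_, ?_⟩
  · -- degrees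
    intro k
    rcases h : Encodable.decode₂ (GS.J d ε) k with _ | j
    · simp only [GS.fseq, GS.degseq, h]
      refine ⟨by have := GS.Kc_ge_two (d := d) (ε := ε); omega, Submodule.zero_mem _⟩
    · simp only [GS.fseq, GS.degseq, h]
      constructor
      · have h1 := (GS.degJ_bounds j).1
        have h2 := GS.nseq_ge hd hε hdε j.1
        omega
      · exact GS.rel_mem_grade F d j.1 (GS.nseq d ε j.1) ↑j.2
  · -- nilpotency
    intro g hg
    set Bspan : ℕ → Submodule F (FreeAlgebra F (Fin d)) :=
      fun m => Submodule.span F (Set.range (fun i : GS.Idx d m => GS.mono F i)) with hB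
    have hmono : Monotone Bspan := by
      intro a b hab
      apply Submodule.span_mono
      rintro _ ⟨⟨⟨k, hk⟩, v⟩, rfl⟩
      exact ⟨⟨⟨k, lt_of_lt_of_le hk hab⟩, v⟩, rfl⟩
    have hg2 : g ∈ ⨆ m, Bspan m := by
      have hle : freeAlgAug F d ≤ ⨆ m, Bspan m := by
        rw [freeAlgAug]
        refine iSup_le fun k => ?_
        refine le_trans ?_ (le_iSup Bspan (k + 1))
        rw [GS.grade_eq_span]
        refine Submodule.span_le.mpr ?_
        rintro _ ⟨v, rfl⟩
        exact Submodule.subset_span ⟨⟨⟨k, Nat.lt_succ_self k⟩, v⟩, rfl⟩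
      exact hle hg
    obtain ⟨m, hgm⟩ := (Submodule.mem_iSup_of_directed Bspan hmono.directed_le).mp hg2
    obtain ⟨c, rfl⟩ := (Submodule.mem_span_range_iff_exists_fun F).mp hgm
    refine ⟨GS.nseq d ε m, by have := GS.nseq_ge hd hε hdε m; omega, ?_⟩
    refine Submodule.span_mono ?_ (GS.pow_mem_span_rel F d m c (GS.nseq d ε m))
    rintro _ ⟨M, hcard, rfl⟩
    refine ⟨Encodable.encode (⟨m, ⟨M, hcard⟩⟩ : GS.J d ε), 1, 1, ?_⟩
    rw [one_mul, mul_one]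
    show GS.rel F d m (GS.nseq d ε m) M = GS.fseq F d ε _
    simp only [GS.fseq, Encodable.decode₂_encode]
    rfl
  · -- counting
    intro ℓ hℓ
    set cR : ℝ := (d : ℝ) - 2 * ε with hcR
    have hc1 : (1 : ℝ) < cR := hdε
    set Sreal : Set (GS.J d ε) := {j | GS.degJ j = ℓ} with hSreal
    have hrange : ∀ j ∈ Sreal, GS.nseq d ε j.1 ≤ ℓ ∧ ℓ ≤ j.1 * GS.nseq d ε j.1 := by
      intro j hj
      rw [Set.mem_setOf_eq] at hj
      rw [← hj]
      exact GS.degJ_bounds j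
    have hSfin : Sreal.Finite := by
      have hsub : Sreal ⊆ ⋃ m ∈ Set.Iio (ℓ + 1),
          Set.range (@Sigma.mk ℕ (fun m => Sym (GS.Idx d m) (GS.nseq d ε m)) m) := by
        intro j hj
        have h1 := (hrange j hj).1
        have h2 := GS.nseq_ge hd hε hdε j.1
        refine Set.mem_biUnion (show j.1 ∈ Set.Iio (ℓ + 1) from by
          simp only [Set.mem_Iio]; omega) ⟨j.2, Sigma.eta j⟩
      exact Set.Finite.subset
        (Set.Finite.biUnion (Set.finite_Iio _) fun m _ => Set.finite_range _) hsub
    have hincl : {k | GS.degseq d ε k = ℓ} ⊆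
        (Encodable.encode '' Sreal) ∪ {ℓ - GS.Kc d ε} := by
      intro k hk
      rw [Set.mem_setOf_eq] at hk
      rcases h : Encodable.decode₂ (GS.J d ε) k with _ | j
      · right
        simp only [GS.degseq, h] at hk
        have := GS.Kc_ge_two (d := d) (ε := ε)
        simp only [Set.mem_singleton_iff]
        omega
      · left
        simp only [GS.degseq, h] at hk
        exact ⟨j, hk, Encodable.mem_decode₂.mp (Option.mem_def.mpr h)⟩
    have hfin2 : {k | GS.degseq d ε k = ℓ}.Finite :=
      Set.Finite.subset ((hSfin.image _).union (Set.finite_singleton _)) hincl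
    refine ⟨hfin2, ?_⟩
    have hcard : {k | GS.degseq d ε k = ℓ}.ncard ≤ Sreal.ncard + 1 := by
      calc {k | GS.degseq d ε k = ℓ}.ncard
          ≤ (Encodable.encode '' Sreal ∪ {ℓ - GS.Kc d ε}).ncard :=
            Set.ncard_le_ncard hincl ((hSfin.image _).union (Set.finite_singleton _))
        _ ≤ (Encodable.encode '' Sreal).ncard + ({ℓ - GS.Kc d ε} : Set ℕ).ncard :=
            Set.ncard_union_le _ _
        _ ≤ Sreal.ncard + 1 := by
            have := Set.ncard_image_le (f := Encodable.encode) hSfin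
            rw [Set.ncard_singleton]
            omega
    by_cases hS : Sreal.Nonempty
    · obtain ⟨j₀, hj₀⟩ := hS
      obtain ⟨m', hm'⟩ : ∃ m', j₀.1 = m' + 1 := ⟨j₀.1 - 1, by have := GS.J_fst_pos j₀; omega⟩
      have hblock : ∀ j ∈ Sreal, j.1 = j₀.1 := by
        intro j hj
        by_contra hne
        have key : ∀ a b : ℕ, a < b → GS.nseq d ε a ≤ ℓ → ℓ ≤ a * GS.nseq d ε a →
            GS.nseq d ε b ≤ ℓ → False := by
          intro a b hab h1 h2 h3
          have h4 : a * GS.nseq d ε a < GS.nseq d ε (a + 1) := GS.nseq_mul_lt_succ hd hε hdε a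
          have h5 : GS.nseq d ε (a + 1) ≤ GS.nseq d ε b := (GS.nseq_mono hd hε hdε).monotone hab
          generalize a * GS.nseq d ε a = t at h2 h4
          omega
        rcases lt_or_gt_of_ne hne with hlt | hgt
        · exact key j.1 j₀.1 hlt (hrange j hj).1 (hrange j hj).2 (hrange j₀ hj₀).1
        · exact key j₀.1 j.1 hgt (hrange j₀ hj₀).1 (hrange j₀ hj₀).2 (hrange j hj).1
      have hsub2 : Sreal ⊆ Set.range (@Sigma.mk ℕ (fun m => Sym (GS.Idx d m) (GS.nseq d ε m)) j₀.1) := by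
        intro j hj
        have hfst := hblock j hj
        rcases j with ⟨m2, M2⟩
        dsimp at hfst
        subst hfst
        exact ⟨M2, rfl⟩
      have h1 : Sreal.ncard ≤ GS.csym d j₀.1 (GS.nseq d ε j₀.1) := by
        calc Sreal.ncard
            ≤ (Set.range (@Sigma.mk ℕ (fun m => Sym (GS.Idx d m) (GS.nseq d ε m)) j₀.1)).ncard :=
              Set.ncard_le_ncard hsub2 (Set.finite_range _)
          _ = GS.csym d j₀.1 (GS.nseq d ε j₀.1) := by
              rw [← Nat.card_coe_set_eq, Nat.card_range_of_injective sigma_mk_injective,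
                Nat.card_eq_fintype_card]
              rfl
      have hbb := (GS.nseq_spec hd hε hdε m').2
      rw [← hm'] at hbb
      have hmon : ε ^ 2 * cR ^ (GS.nseq d ε j₀.1 - 2) ≤ ε ^ 2 * cR ^ (ℓ - 2) := by
        refine mul_le_mul_of_nonneg_left ?_ (by positivity)
        exact pow_le_pow_right₀ (le_of_lt hc1) (by have := (hrange j₀ hj₀).1; omega)
      calc ({k | GS.degseq d ε k = ℓ}.ncard : ℝ) ≤ (Sreal.ncard : ℝ) + 1 := by
            exact_mod_cast hcard
        _ ≤ (GS.csym d j₀.1 (GS.nseq d ε j₀.1) : ℝ) + 1 := by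
            have : (Sreal.ncard : ℝ) ≤ _ := Nat.cast_le.mpr h1
            linarith
        _ ≤ ε ^ 2 * cR ^ (GS.nseq d ε j₀.1 - 2) := hbb
        _ ≤ _ := hmon
    · rw [Set.not_nonempty_iff_eq_empty] at hS
      by_cases hne : {k | GS.degseq d ε k = ℓ}.Nonempty
      · obtain ⟨k, hk⟩ := hne
        rw [Set.mem_setOf_eq] at hk
        rcases h : Encodable.decode₂ (GS.J d ε) k with _ | j
        · simp only [GS.degseq, h] at hk
          have hKc := GS.Kc_spec (d := d) hε hdε
          have hmon : ε ^ 2 * cR ^ (GS.Kc d ε - 2) ≤ ε ^ 2 * cR ^ (ℓ - 2) := by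
            refine mul_le_mul_of_nonneg_left ?_ (by positivity)
            exact pow_le_pow_right₀ (le_of_lt hc1) (by omega)
          have hn1 : {k | GS.degseq d ε k = ℓ}.ncard ≤ 1 := by
            have h2 := hcard
            rw [hS] at h2
            simpa using h2
          calc ({k | GS.degseq d ε k = ℓ}.ncard : ℝ) ≤ 1 := by exact_mod_cast hn1
            _ ≤ ε ^ 2 * cR ^ (GS.Kc d ε - 2) := hKc
            _ ≤ _ := hmon
        · exfalso
          simp only [GS.degseq, h] at hk
          have hjS : j ∈ Sreal := hk
          rw [hS] at hjS
          exact hjS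
      · rw [Set.not_nonempty_iff_eq_empty] at hne
        rw [hne]
        simp only [Set.ncard_empty, Nat.cast_zero]
        positivity
end

section
/- Let F be a field, d ≥ 2, T = F⟨x₁,…,x_d⟩, and let f₁, f₂, … be a sequence of homogeneous polynomials of degree ≥ 2 generating a two-sided ideal I such that (1) every g ∈ T_{≥1} has some power in I, and (2) for some ε > 0 with d − 2ε > 1 the number r_ℓ of generators of degree ℓ satisfies r_ℓ ≤ ε²·(d−2ε)^{ℓ−2} for all ℓ ≥ 2. Then the quotient algebra A = T_{≥1}/I is a nil algebra that is infinite-dimensional over F. -/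
open Pointwise

namespace GSaux

variable (F : Type*) [Field F] (d : ℕ)

noncomputable def mon : FreeMonoid (Fin d) →* FreeAlgebra F (Fin d) :=
  FreeMonoid.lift (FreeAlgebra.ι F)

lemma mon_eq_basis (w : FreeMonoid (Fin d)) :
    mon F d w = FreeAlgebra.basisFreeMonoid F (Fin d) w := by
  simp only [FreeAlgebra.basisFreeMonoid, Module.Basis.map_apply, Finsupp.coe_basisSingleOne]
  rw [LinearEquiv.trans_symm, LinearEquiv.trans_apply, show (MonoidAlgebra.coeffLinearEquiv F).symm (Finsupp.single w (1:F)) = MonoidAlgebra.single w (1:F) from rfl]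
  show _ = (FreeAlgebra.equivMonoidAlgebraFreeMonoid (R := F) (X := Fin d)).symm _
  rw [FreeAlgebra.equivMonoidAlgebraFreeMonoid, AlgEquiv.ofAlgHom_symm_apply,
    MonoidAlgebra.lift_single, one_smul]
  rfl

lemma words_mul (m n : ℕ) :
    {w : FreeMonoid (Fin d) | w.length = m} * {w : FreeMonoid (Fin d) | w.length = n}
      = {w : FreeMonoid (Fin d) | w.length = m + n} := by
  ext w
  simp only [Set.mem_mul, Set.mem_setOf_eq]
  constructor
  · rintro ⟨a, ha, b, hb, rfl⟩
    rw [FreeMonoid.length_mul, ha, hb]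
  · intro hw
    refine ⟨FreeMonoid.ofList (w.toList.take m), ?_, FreeMonoid.ofList (w.toList.drop m), ?_, ?_⟩
    · show (w.toList.take m).length = m
      rw [List.length_take]
      have : w.toList.length = m + n := hw
      omega
    · show (w.toList.drop m).length = n
      rw [List.length_drop]
      have : w.toList.length = m + n := hw
      omega
    · rw [← FreeMonoid.ofList_append, List.take_append_drop]
      exact FreeMonoid.ofList_toList w

lemma span_S_eq :
    Submodule.span F (Set.range (FreeAlgebra.ι F : Fin d → FreeAlgebra F (Fin d)))
      = Submodule.span F (mon F d '' {w | w.length = 1}) := by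
  congr 1
  ext x
  constructor
  · rintro ⟨i, rfl⟩
    exact ⟨FreeMonoid.of i, rfl, by simp [mon]⟩
  · rintro ⟨w, hw, rfl⟩
    obtain ⟨i, hi⟩ := List.length_eq_one_iff.mp (hw : w.toList.length = 1)
    have : w = FreeMonoid.of i := by
      rw [← FreeMonoid.ofList_toList w, hi]; rfl
    exact ⟨i, by simp [this, mon]⟩

lemma grade_eq_span (n : ℕ) :
    freeAlgGrade F d n = Submodule.span F (mon F d '' {w | w.length = n}) := by
  induction n with
  | zero =>
    have : {w : FreeMonoid (Fin d) | w.length = 0} = {1} := by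
      ext w
      constructor
      · intro hw
        have : w.toList = [] := List.length_eq_zero_iff.mp hw
        show w = 1
        rw [← FreeMonoid.ofList_toList w, this]; rfl
      · rintro rfl; rfl
    rw [freeAlgGrade, pow_zero, this, Set.image_singleton, map_one, Submodule.one_eq_span]
  | succ n ih =>
    have : freeAlgGrade F d (n+1)
        = Submodule.span F (mon F d '' {w | w.length = 1})
          * Submodule.span F (mon F d '' {w | w.length = n}) := by
      rw [freeAlgGrade, pow_succ', ← span_S_eq, ← ih]
      rfl
    rw [this, Submodule.span_mul_span, ← Set.image_mul, words_mul]
    norm_num [add_comm]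

end GSaux

namespace GSaux2
open GSaux

variable (F : Type*) [Field F] (d : ℕ)

lemma range_vector_eq (n : ℕ) :
    Set.range (fun v : List.Vector (Fin d) n => mon F d (FreeMonoid.ofList v.val))
      = mon F d '' {w | w.length = n} := by
  ext x
  constructor
  · rintro ⟨v, rfl⟩
    exact ⟨FreeMonoid.ofList v.val, v.property, rfl⟩
  · rintro ⟨w, hw, rfl⟩
    exact ⟨⟨w.toList, hw⟩, rfl⟩

lemma finrank_grade (n : ℕ) :
    Module.finrank F ↥(freeAlgGrade F d n) = d ^ n := by
  rw [grade_eq_span, ← range_vector_eq]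
  have hli : LinearIndependent F
      (fun v : List.Vector (Fin d) n => mon F d (FreeMonoid.ofList v.val)) := by
    have : (fun v : List.Vector (Fin d) n => mon F d (FreeMonoid.ofList v.val))
        = (FreeAlgebra.basisFreeMonoid F (Fin d)) ∘ (fun v => FreeMonoid.ofList v.val) := by
      funext v; exact mon_eq_basis F d _
    rw [this]
    exact (FreeAlgebra.basisFreeMonoid F (Fin d)).linearIndependent.comp _
      (fun v w h => Subtype.ext h)
  rw [finrank_span_eq_card hli, card_vector, Fintype.card_fin]

instance grade_fd (n : ℕ) : FiniteDimensional F ↥(freeAlgGrade F d n) := by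
  rw [grade_eq_span, ← range_vector_eq]
  exact FiniteDimensional.span_of_finite F (Set.finite_range _)

/-- Projection onto the degree `n` component. -/
noncomputable def pr (n : ℕ) : FreeAlgebra F (Fin d) →ₗ[F] FreeAlgebra F (Fin d) :=
  (FreeAlgebra.basisFreeMonoid F (Fin d)).constr F
    (fun w => if w.length = n then mon F d w else 0)

lemma pr_mon (n : ℕ) (w : FreeMonoid (Fin d)) :
    pr F d n (mon F d w) = if w.length = n then mon F d w else 0 := by
  rw [mon_eq_basis, pr, Module.Basis.constr_basis]
  simp [mon_eq_basis]

lemma pr_mem_grade (n : ℕ) (x : FreeAlgebra F (Fin d)) :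
    pr F d n x ∈ freeAlgGrade F d n := by
  have hx : x ∈ Submodule.span F (Set.range (FreeAlgebra.basisFreeMonoid F (Fin d))) := by
    rw [Module.Basis.span_eq]; trivial
  induction hx using Submodule.span_induction with
  | mem z hz =>
    obtain ⟨w, rfl⟩ := hz
    rw [← mon_eq_basis, pr_mon]
    split
    · rename_i h
      rw [grade_eq_span]
      exact Submodule.subset_span ⟨w, h, rfl⟩
    · exact Submodule.zero_mem _
  | zero => rw [map_zero]; exact Submodule.zero_mem _
  | add x y _ _ hx hy => rw [map_add]; exact Submodule.add_mem _ hx hy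
  | smul c x _ hx => rw [map_smul]; exact Submodule.smul_mem _ _ hx

lemma pr_of_grade {m n : ℕ} {x : FreeAlgebra F (Fin d)} (hx : x ∈ freeAlgGrade F d m) :
    pr F d n x = if m = n then x else 0 := by
  rw [grade_eq_span] at hx
  induction hx using Submodule.span_induction with
  | mem z hz =>
    obtain ⟨w, hw, rfl⟩ := hz
    rw [pr_mon, hw]
  | zero => simp
  | add x y _ _ hx hy => rw [map_add, hx, hy]; split <;> simp
  | smul c x _ hx => rw [map_smul, hx]; split <;> simp

lemma pr_of_grade_self {n : ℕ} {x : FreeAlgebra F (Fin d)} (hx : x ∈ freeAlgGrade F d n) :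
    pr F d n x = x := by rw [pr_of_grade F d hx, if_pos rfl]

lemma pr_of_grade_ne {m n : ℕ} (h : m ≠ n) {x : FreeAlgebra F (Fin d)}
    (hx : x ∈ freeAlgGrade F d m) : pr F d n x = 0 := by
  rw [pr_of_grade F d hx, if_neg h]

lemma grade_mul_grade (m n : ℕ) :
    freeAlgGrade F d m * freeAlgGrade F d n = freeAlgGrade F d (m + n) := by
  rw [freeAlgGrade, freeAlgGrade, freeAlgGrade, pow_add]

end GSaux2

namespace GSaux3
open GSaux GSaux2

variable {F : Type*} [Field F] {d : ℕ}
variable {f : ℕ → FreeAlgebra F (Fin d)} {deg : ℕ → ℕ}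
variable {I : Submodule F (FreeAlgebra F (Fin d))}

lemma mon_mem_grade (w : FreeMonoid (Fin d)) : mon F d w ∈ freeAlgGrade F d w.length := by
  rw [grade_eq_span]
  exact Submodule.subset_span ⟨w, rfl, rfl⟩

lemma mul_mem_grade {a b : FreeAlgebra F (Fin d)} {m n : ℕ}
    (ha : a ∈ freeAlgGrade F d m) (hb : b ∈ freeAlgGrade F d n) :
    a * b ∈ freeAlgGrade F d (m + n) := by
  rw [← grade_mul_grade]
  exact Submodule.mul_mem_mul ha hb

section
variable (hhom : ∀ j, f j ∈ freeAlgGrade F d (deg j))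
variable (hI : I = Submodule.span F {x | ∃ j a b, x = a * f j * b})

include hhom hI

lemma gen_mem_grade (j : ℕ) (w u : FreeMonoid (Fin d)) :
    mon F d w * f j * mon F d u ∈ freeAlgGrade F d (w.length + deg j + u.length) :=
  mul_mem_grade (mul_mem_grade (mon_mem_grade w) (hhom j)) (mon_mem_grade u)

lemma I_eq_J : I = Submodule.span F
    {x | ∃ j w u, x = mon F d w * f j * mon F d u} := by
  rw [hI]
  apply le_antisymm
  · rw [Submodule.span_le]
    rintro x ⟨j, a, b, rfl⟩
    have hamem : a ∈ Submodule.span F (Set.range (FreeAlgebra.basisFreeMonoid F (Fin d))) := by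
      rw [Module.Basis.span_eq]; trivial
    induction hamem using Submodule.span_induction with
    | mem z hz =>
      obtain ⟨w, rfl⟩ := hz
      rw [← mon_eq_basis]
      have hbmem : b ∈ Submodule.span F (Set.range (FreeAlgebra.basisFreeMonoid F (Fin d))) := by
        rw [Module.Basis.span_eq]; trivial
      induction hbmem using Submodule.span_induction with
      | mem z hz =>
        obtain ⟨u, rfl⟩ := hz
        rw [← mon_eq_basis]
        exact Submodule.subset_span ⟨j, w, u, rfl⟩
      | zero => rw [mul_zero]; exact Submodule.zero_mem _
      | add x y _ _ hx hy => rw [mul_add]; exact Submodule.add_mem _ hx hy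
      | smul c x _ hx => rw [mul_smul_comm]; exact Submodule.smul_mem _ _ hx
    | zero => rw [zero_mul, zero_mul]; exact Submodule.zero_mem _
    | add x y _ _ hx hy => rw [add_mul, add_mul]; exact Submodule.add_mem _ hx hy
    | smul c x _ hx => rw [smul_mul_assoc, smul_mul_assoc]; exact Submodule.smul_mem _ _ hx
  · rw [Submodule.span_le]
    rintro x ⟨j, w, u, rfl⟩
    exact Submodule.subset_span ⟨j, mon F d w, mon F d u, rfl⟩

lemma I_mul_right {x : FreeAlgebra F (Fin d)} (hx : x ∈ I) (y : FreeAlgebra F (Fin d)) :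
    x * y ∈ I := by
  rw [hI] at hx ⊢
  induction hx using Submodule.span_induction with
  | mem z hz =>
    obtain ⟨j, a, b, rfl⟩ := hz
    exact Submodule.subset_span ⟨j, a, b * y, by rw [mul_assoc]⟩
  | zero => rw [zero_mul]; exact Submodule.zero_mem _
  | add x y _ _ hx hy => rw [add_mul]; exact Submodule.add_mem _ hx hy
  | smul c x _ hx => rw [smul_mul_assoc]; exact Submodule.smul_mem _ _ hx

lemma pr_I (hdeg : ∀ j, 2 ≤ deg j) {n : ℕ} {x : FreeAlgebra F (Fin d)} (hx : x ∈ I) :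
    pr F d n x ∈ I ∧ (n < 2 → pr F d n x = 0) := by
  rw [I_eq_J hhom hI] at hx
  induction hx using Submodule.span_induction with
  | mem z hz =>
    obtain ⟨j, w, u, rfl⟩ := hz
    have hg := gen_mem_grade hhom hI j w u
    rw [pr_of_grade F d hg]
    split
    · rename_i h
      constructor
      · rw [I_eq_J hhom hI]; exact Submodule.subset_span ⟨j, w, u, rfl⟩
      · intro hn; have := hdeg j; omega
    · exact ⟨Submodule.zero_mem _, fun _ => rfl⟩
  | zero => simp
  | add x y _ _ hx hy =>
    rw [map_add]
    exact ⟨Submodule.add_mem _ hx.1 hy.1, fun h => by rw [hx.2 h, hy.2 h, add_zero]⟩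
  | smul c x _ hx =>
    rw [map_smul]
    exact ⟨Submodule.smul_mem _ _ hx.1, fun h => by rw [hx.2 h, smul_zero]⟩

end
end GSaux3

namespace GSaux4
open GSaux GSaux2

variable {F : Type*} [Field F] {V : Type*} [AddCommGroup V] [Module F V]

lemma exists_compl_in (p q : Submodule F V) (hpq : p ≤ q) :
    ∃ C : Submodule F V, C ≤ q ∧ C ⊓ p = ⊥ ∧ C ⊔ p = q := by
  obtain ⟨K, hK⟩ := Submodule.exists_isCompl (p.comap q.subtype)
  refine ⟨K.map q.subtype, Submodule.map_subtype_le _ _, ?_, ?_⟩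
  · have : K.map q.subtype ⊓ p = K.map q.subtype ⊓ (p.comap q.subtype).map q.subtype := by
      rw [Submodule.map_comap_subtype, inf_of_le_right hpq]
    rw [this, ← Submodule.map_inf _ (Submodule.injective_subtype q), hK.symm.inf_eq_bot,
      Submodule.map_bot]
  · have : K.map q.subtype ⊔ p = (K ⊔ p.comap q.subtype).map q.subtype := by
      rw [Submodule.map_sup, Submodule.map_comap_subtype, inf_of_le_right hpq]
    rw [this, hK.symm.sup_eq_top, Submodule.map_top, Submodule.range_subtype]

variable {A : Type*} [Ring A] [Algebra F A]

lemma span_eq_range_val (P : Submodule F A) [FiniteDimensional F P] :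
    P = Submodule.span F (Set.range fun i : Fin (Module.finrank F P) =>
      ((Module.finBasis F P i : P) : A)) := by
  conv_lhs => rw [← Submodule.range_subtype P]
  rw [← Submodule.map_top, ← (Module.finBasis F P).span_eq, Submodule.map_span, ← Set.range_comp]
  rfl

lemma finrank_mul_le (P Q : Submodule F A) [FiniteDimensional F P] [FiniteDimensional F Q] :
    Module.finrank F ↥(P * Q) ≤ Module.finrank F P * Module.finrank F Q := by
  classical
  set n := Module.finrank F P
  set m := Module.finrank F Q
  set sp : Fin n → A := fun i => ((Module.finBasis F P i : P) : A)
  set st : Fin m → A := fun i => ((Module.finBasis F Q i : Q) : A)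
  have hPQ : P * Q = Submodule.span F (Set.range fun p : Fin n × Fin m => sp p.1 * st p.2) := by
    rw [span_eq_range_val P, span_eq_range_val Q, Submodule.span_mul_span]
    congr 1
    ext x
    constructor
    · rintro ⟨a, ⟨i, rfl⟩, b, ⟨j, rfl⟩, rfl⟩
      exact ⟨(i, j), rfl⟩
    · rintro ⟨⟨i, j⟩, rfl⟩
      exact ⟨sp i, ⟨i, rfl⟩, st j, ⟨j, rfl⟩, rfl⟩
  rw [hPQ]
  calc Module.finrank F ↥(Submodule.span F (Set.range fun p : Fin n × Fin m => sp p.1 * st p.2))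
      ≤ (Set.range fun p : Fin n × Fin m => sp p.1 * st p.2).toFinset.card :=
        finrank_span_le_card _
    _ ≤ n * m := by
        rw [Set.toFinset_range]
        calc (Finset.image _ Finset.univ).card ≤ Finset.univ.card := Finset.card_image_le
          _ = n * m := by simp
  done

lemma fd_mul (P Q : Submodule F A) [FiniteDimensional F P] [FiniteDimensional F Q] :
    FiniteDimensional F ↥(P * Q) := by
  rw [span_eq_range_val P, span_eq_range_val Q, Submodule.span_mul_span]
  exact FiniteDimensional.span_of_finite F (((Set.finite_range _).mul (Set.finite_range _)))

lemma finrank_sup_le (p q : Submodule F V) [FiniteDimensional F p] [FiniteDimensional F q] :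
    Module.finrank F ↥(p ⊔ q) ≤ Module.finrank F p + Module.finrank F q := by
  have := Submodule.finrank_sup_add_finrank_inf_eq p q
  omega

lemma fd_finset_sup {ι : Type*} (s : Finset ι) (M : ι → Submodule F V)
    (h : ∀ i ∈ s, FiniteDimensional F ↥(M i)) : FiniteDimensional F ↥(s.sup M) := by
  classical
  induction s using Finset.induction_on with
  | empty => rw [Finset.sup_empty]; infer_instance
  | @insert a s ha ih =>
    rw [Finset.sup_insert]
    haveI : FiniteDimensional F ↥(M a) := h a (Finset.mem_insert_self a s)
    haveI : FiniteDimensional F ↥(s.sup M) := ih fun i hi => h i (Finset.mem_insert_of_mem hi)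
    infer_instance

lemma finrank_finset_sup_le {ι : Type*} (s : Finset ι) (M : ι → Submodule F V)
    (h : ∀ i ∈ s, FiniteDimensional F ↥(M i)) :
    Module.finrank F ↥(s.sup M) ≤ ∑ i ∈ s, Module.finrank F ↥(M i) := by
  classical
  induction s using Finset.induction_on with
  | empty => rw [Finset.sup_empty]; simp
  | @insert a s ha ih =>
    rw [Finset.sup_insert, Finset.sum_insert ha]
    haveI : FiniteDimensional F ↥(M a) := h a (Finset.mem_insert_self a s)
    haveI : FiniteDimensional F ↥(s.sup M) :=
      fd_finset_sup s M fun i hi => h i (Finset.mem_insert_of_mem hi)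
    exact le_trans (finrank_sup_le _ _)
      (Nat.add_le_add_left (ih fun i hi => h i (Finset.mem_insert_of_mem hi)) _)

end GSaux4

namespace GSaux5
open GSaux GSaux2 GSaux3

variable {F : Type*} [Field F] {d : ℕ}
variable {f : ℕ → FreeAlgebra F (Fin d)} {deg : ℕ → ℕ}
variable {I : Submodule F (FreeAlgebra F (Fin d))}

/-- The key structural inclusion of the Golod–Shafarevich argument. -/
lemma key_inclusion
    (hdeg : ∀ j, 2 ≤ deg j)
    (hhom : ∀ j, f j ∈ freeAlgGrade F d (deg j))
    (hI : I = Submodule.span F {x | ∃ j a b, x = a * f j * b})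
    (C : ℕ → Submodule F (FreeAlgebra F (Fin d)))
    (hC3 : ∀ m, C m ⊔ (I ⊓ freeAlgGrade F d m) = freeAlgGrade F d m)
    (Jn : Finset ℕ) (n : ℕ) (hn : 1 ≤ n)
    (hJn : ∀ j, deg j ≤ n → j ∈ Jn) :
    I ⊓ freeAlgGrade F d n ≤
      ((I ⊓ freeAlgGrade F d (n - 1)) *
        Submodule.span F (Set.range (FreeAlgebra.ι F : Fin d → FreeAlgebra F (Fin d))))
      ⊔ Jn.sup (fun j => C (n - deg j) * Submodule.span F {f j}) := by
  set S := Submodule.span F (Set.range (FreeAlgebra.ι F : Fin d → FreeAlgebra F (Fin d)))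
  set RHS := ((I ⊓ freeAlgGrade F d (n - 1)) * S)
      ⊔ Jn.sup (fun j => C (n - deg j) * Submodule.span F {f j}) with hRHS
  rintro x ⟨hxI, hxg⟩
  have hxpr : pr F d n x = x := pr_of_grade_self F d hxg
  have hmap : Submodule.map (pr F d n) I ≤ RHS := by
    rw [I_eq_J hhom hI, Submodule.map_span_le]
    rintro z ⟨j, w, u, rfl⟩
    have hg := gen_mem_grade hhom hI j w u
    rw [pr_of_grade F d hg]
    split
    case isFalse => exact Submodule.zero_mem _
    case isTrue h =>
      rcases List.eq_nil_or_concat u.toList with hu | ⟨L, a, hu⟩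
      · -- u = 1 : use the complement decomposition of mon w
        have hu1 : mon F d u = 1 := by
          rw [← FreeMonoid.ofList_toList u, hu]; exact map_one _
        have hlu : u.length = 0 := by simpa [FreeMonoid.length] using congrArg List.length hu
        rw [hlu, add_zero] at h
        have hj : j ∈ Jn := hJn j (by omega)
        have hw : mon F d w ∈ C w.length ⊔ (I ⊓ freeAlgGrade F d w.length) := by
          rw [hC3]; exact mon_mem_grade w
        obtain ⟨c, hc, y, hy, hcy⟩ := Submodule.mem_sup.mp hw
        have hz : mon F d w * f j * mon F d u = c * f j + y * f j := by
          rw [hu1, mul_one, ← hcy, add_mul]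
        rw [hz]
        apply Submodule.add_mem
        · refine Submodule.mem_sup_right
            ((Finset.le_sup (f := fun j => C (n - deg j) * Submodule.span F {f j}) hj) ?_)
          have hwl : w.length = n - deg j := by omega
          rw [← hwl]
          exact Submodule.mul_mem_mul hc (Submodule.subset_span rfl)
        · apply Submodule.mem_sup_left
          have hfj : f j ∈ freeAlgGrade F d (deg j - 1) * S := by
            have : freeAlgGrade F d (deg j - 1) * S = freeAlgGrade F d (deg j) := by
              have : S = freeAlgGrade F d 1 := by rw [freeAlgGrade, pow_one]
              rw [this, grade_mul_grade]
              congr 1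
              have := hdeg j; omega
            rw [this]; exact hhom j
          refine Submodule.mul_induction_on hfj (fun t ht s hs => ?_)
            (fun a b ha hb => by rw [mul_add]; exact Submodule.add_mem _ ha hb)
          have h1 : y * (t * s) = (y * t) * s := by rw [mul_assoc]
          rw [h1]
          apply Submodule.mul_mem_mul _ hs
          refine ⟨I_mul_right hhom hI hy.1 t, ?_⟩
          have hwd : w.length + (deg j - 1) = n - 1 := by have := hdeg j; omega
          rw [← hwd]
          exact mul_mem_grade hy.2 ht
      · -- u ends with a letter a
        have hu2 : mon F d u = mon F d (FreeMonoid.ofList L) * FreeAlgebra.ι F a := by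
          conv_lhs => rw [← FreeMonoid.ofList_toList u, hu]
          rw [List.concat_eq_append, FreeMonoid.ofList_append, map_mul]
          congr 1
        apply Submodule.mem_sup_left
        have h2 : mon F d w * f j * mon F d u
            = (mon F d w * f j * mon F d (FreeMonoid.ofList L)) * FreeAlgebra.ι F a := by
          rw [hu2, ← mul_assoc]
        rw [h2]
        refine Submodule.mul_mem_mul (⟨?_, ?_⟩ :
          _ ∈ I ⊓ freeAlgGrade F d (n-1)) (Submodule.subset_span ⟨a, rfl⟩)
        · rw [I_eq_J hhom hI]
          exact Submodule.subset_span ⟨j, w, FreeMonoid.ofList L, rfl⟩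
        · have h3 : u.length = L.length + 1 := by
            have := congrArg List.length hu
            simpa [FreeMonoid.length] using this
          have hL : (FreeMonoid.ofList L : FreeMonoid (Fin d)).length = L.length := rfl
          have hd2 := hdeg j
          have hlen : w.length + deg j + (FreeMonoid.ofList L : FreeMonoid (Fin d)).length
              = n - 1 := by
            rw [hL]; omega
          rw [← hlen]
          exact gen_mem_grade hhom hI j w (FreeMonoid.ofList L)
  have hfin := hmap ⟨x, hxI, rfl⟩
  rwa [hxpr] at hfin

end GSaux5

namespace GSaux6
open GSaux GSaux2 GSaux3 GSaux4 GSaux5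

lemma finrank_span_singleton_le {F : Type*} [Field F] {V : Type*} [AddCommGroup V] [Module F V]
    (x : V) : Module.finrank F ↥(Submodule.span F ({x} : Set V)) ≤ 1 := by
  rcases eq_or_ne x 0 with h | h
  · rw [h, Submodule.span_zero_singleton]
    simp [finrank_bot]
  · rw [finrank_span_singleton h]

end GSaux6

set_option maxHeartbeats 1000000 in
theorem golod_shafarevich_quotient_nil_infinite
    (F : Type*) [Field F] (d : ℕ) (hd : 2 ≤ d)
    (f : ℕ → FreeAlgebra F (Fin d)) (deg : ℕ → ℕ)
    (hdeg : ∀ j, 2 ≤ deg j)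
    (hhom : ∀ j, f j ∈ freeAlgGrade F d (deg j))
    (I : Submodule F (FreeAlgebra F (Fin d)))
    (hI : I = Submodule.span F {x | ∃ j a b, x = a * f j * b})
    (hnil : ∀ g ∈ freeAlgAug F d, ∃ n : ℕ, 1 ≤ n ∧ g ^ n ∈ I)
    (ε : ℝ) (hε : 0 < ε) (hdε : 1 < (d : ℝ) - 2 * ε)
    (r : ℕ → ℕ)
    (hrcount : ∀ ℓ, {j | deg j = ℓ}.Finite ∧ {j | deg j = ℓ}.ncard = r ℓ)
    (hrbound : ∀ ℓ : ℕ, 2 ≤ ℓ → (r ℓ : ℝ) ≤ ε ^ 2 * ((d : ℝ) - 2 * ε) ^ (ℓ - 2)) :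
    (∀ g ∈ freeAlgAug F d, ∃ n : ℕ, 1 ≤ n ∧ g ^ n ∈ I) ∧
    ¬ Module.Finite F
        (↥(freeAlgAug F d) ⧸ (I.comap (freeAlgAug F d).subtype)) := by
  classical
  open GSaux GSaux2 GSaux3 GSaux4 GSaux5 GSaux6 in
  refine ⟨hnil, fun hfin => ?_⟩
  -- notation
  set S : Submodule F (FreeAlgebra F (Fin d)) :=
    Submodule.span F (Set.range (FreeAlgebra.ι F : Fin d → FreeAlgebra F (Fin d))) with hSdef
  have hS1 : S = freeAlgGrade F d 1 := by rw [freeAlgGrade, pow_one]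
  -- complements
  choose C hC1 hC2 hC3 using fun n =>
    GSaux4.exists_compl_in (I ⊓ freeAlgGrade F d n) (freeAlgGrade F d n) inf_le_right
  have fdI : ∀ n, FiniteDimensional F ↥(I ⊓ freeAlgGrade F d n) :=
    fun n => Submodule.finiteDimensional_of_le inf_le_right
  have fdC : ∀ n, FiniteDimensional F ↥(C n) :=
    fun n => Submodule.finiteDimensional_of_le (hC1 n)
  set b : ℕ → ℕ := fun n => Module.finrank F ↥(C n) with hbdef
  set i : ℕ → ℕ := fun n => Module.finrank F ↥(I ⊓ freeAlgGrade F d n) with hidef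
  -- dimension splitting
  have hbi : ∀ n, b n + i n = d ^ n := by
    intro n
    haveI := fdI n; haveI := fdC n
    have h1 := Submodule.finrank_sup_add_finrank_inf_eq (C n) (I ⊓ freeAlgGrade F d n)
    rw [hC3 n, hC2 n, finrank_bot, GSaux2.finrank_grade] at h1
    have e1 : b n = Module.finrank F ↥(C n) := rfl
    have e2 : i n = Module.finrank F ↥(I ⊓ freeAlgGrade F d n) := rfl
    omega
  -- low-degree part of I is zero
  have hlow : ∀ m, m < 2 → I ⊓ freeAlgGrade F d m = ⊥ := by
    intro m hm
    rw [eq_bot_iff]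
    rintro x ⟨hxI, hxg⟩
    have h1 : pr F d m x = x := GSaux2.pr_of_grade_self F d hxg
    have h2 := (GSaux3.pr_I hhom hI hdeg hxI).2 hm
    rw [Submodule.mem_bot, ← h1, h2]
  have hi0 : i 0 = 0 := by
    show Module.finrank F ↥(I ⊓ freeAlgGrade F d 0) = 0
    rw [hlow 0 (by norm_num)]
    exact finrank_bot F _
  have hb0 : b 0 = 1 := by have := hbi 0; simp at this; omega
  -- the sets {j | deg j ≤ n} are finite
  have hJfin : ∀ n : ℕ, {j | deg j ≤ n}.Finite := by
    intro n
    have hsub : {j | deg j ≤ n} ⊆ ⋃ ℓ ∈ Finset.range (n+1), {j | deg j = ℓ} := by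
      intro j hj
      simp only [Set.mem_iUnion, Finset.mem_range, Set.mem_setOf_eq]
      exact ⟨deg j, by simpa using Nat.lt_succ_of_le hj, rfl⟩
    exact Set.Finite.subset
      (Set.Finite.biUnion (Finset.range (n+1)).finite_toSet (fun ℓ _ => (hrcount ℓ).1)) hsub
  -- the key dimension count
  have keycount : ∀ m : ℕ,
      i (m+1) ≤ d * i m + ∑ ℓ ∈ Finset.range (m+2), r ℓ * b (m+1-ℓ) := by
    intro m
    set Jn : Finset ℕ := (hJfin (m+1)).toFinset with hJndef
    have hincl := GSaux5.key_inclusion hdeg hhom hI C hC3 Jn (m+1) (by omega)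
      (fun j hj => (hJfin (m+1)).mem_toFinset.mpr hj)
    simp only [Nat.add_sub_cancel] at hincl
    haveI := fdI m
    haveI : FiniteDimensional F ↥S := FiniteDimensional.span_of_finite F (Set.finite_range _)
    haveI hfd1 : FiniteDimensional F ↥((I ⊓ freeAlgGrade F d m) * S) := GSaux4.fd_mul _ _
    have hfdj : ∀ j ∈ Jn, FiniteDimensional F
        ↥(C (m+1 - deg j) * Submodule.span F {f j}) := by
      intro j _
      haveI := fdC (m+1 - deg j)
      exact GSaux4.fd_mul _ _
    haveI hfd2 : FiniteDimensional F
        ↥(Jn.sup fun j => C (m+1 - deg j) * Submodule.span F {f j}) :=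
      GSaux4.fd_finset_sup _ _ hfdj
    haveI : FiniteDimensional F ↥(((I ⊓ freeAlgGrade F d m) * S)
        ⊔ Jn.sup fun j => C (m+1 - deg j) * Submodule.span F {f j}) := inferInstance
    have h1 : i (m+1) ≤ Module.finrank F ↥(((I ⊓ freeAlgGrade F d m) * S)
        ⊔ Jn.sup fun j => C (m+1 - deg j) * Submodule.span F {f j}) := by
      haveI := fdI (m+1)
      exact Submodule.finrank_mono hincl
    have h2 := GSaux4.finrank_sup_le ((I ⊓ freeAlgGrade F d m) * S)
      (Jn.sup fun j => C (m+1 - deg j) * Submodule.span F {f j})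
    have h3 : Module.finrank F ↥((I ⊓ freeAlgGrade F d m) * S) ≤ i m * d := by
      have := GSaux4.finrank_mul_le (I ⊓ freeAlgGrade F d m) S
      have hfs : Module.finrank F ↥S = d := by
        have : Module.finrank F ↥(freeAlgGrade F d 1) = d ^ 1 := GSaux2.finrank_grade F d 1
        rw [hS1, this, pow_one]
      rw [hfs] at this
      exact this
    have h4 : Module.finrank F
        ↥(Jn.sup fun j => C (m+1 - deg j) * Submodule.span F {f j})
        ≤ ∑ j ∈ Jn, b (m+1 - deg j) := by
      refine le_trans (GSaux4.finrank_finset_sup_le _ _ hfdj) (Finset.sum_le_sum ?_)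
      intro j _
      haveI := fdC (m+1 - deg j)
      calc Module.finrank F ↥(C (m+1 - deg j) * Submodule.span F {f j})
          ≤ b (m+1 - deg j) * Module.finrank F ↥(Submodule.span F ({f j} : Set _)) :=
            GSaux4.finrank_mul_le _ _
        _ ≤ b (m+1 - deg j) * 1 :=
            Nat.mul_le_mul_left _ (GSaux6.finrank_span_singleton_le _)
        _ = b (m+1 - deg j) := Nat.mul_one _
    have h5 : ∑ j ∈ Jn, b (m+1 - deg j)
        ≤ ∑ ℓ ∈ Finset.range (m+2), r ℓ * b (m+1-ℓ) := by
      have hmaps : ∀ j ∈ Jn, deg j ∈ Finset.range (m+2) := by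
        intro j hj
        have h6 : deg j ≤ m+1 := (hJfin (m+1)).mem_toFinset.mp hj
        simp only [Finset.mem_range]
        omega
      rw [← Finset.sum_fiberwise_of_maps_to hmaps (fun j => b (m+1 - deg j))]
      refine Finset.sum_le_sum ?_
      intro ℓ _
      have heach : ∑ j ∈ Jn.filter (fun j => deg j = ℓ), b (m+1 - deg j)
          = (Jn.filter (fun j => deg j = ℓ)).card * b (m+1-ℓ) := by
        rw [Finset.sum_congr rfl (fun j hj => by
          rw [(Finset.mem_filter.mp hj).2]), Finset.sum_const, smul_eq_mul]
      rw [heach]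
      have hcard : (Jn.filter (fun j => deg j = ℓ)).card ≤ r ℓ := by
        haveI := (hrcount ℓ).1.fintype
        have hsub : Jn.filter (fun j => deg j = ℓ) ⊆ {j | deg j = ℓ}.toFinset := by
          intro j hj
          rw [Set.mem_toFinset]
          exact (Finset.mem_filter.mp hj).2
        calc (Jn.filter (fun j => deg j = ℓ)).card ≤ {j | deg j = ℓ}.toFinset.card :=
              Finset.card_le_card hsub
          _ = r ℓ := by rw [← Set.ncard_eq_toFinset_card']; exact (hrcount ℓ).2
      exact Nat.mul_le_mul_right _ hcard
    calc i (m+1) ≤ _ := h1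
      _ ≤ _ := h2
      _ ≤ i m * d + ∑ j ∈ Jn, b (m+1 - deg j) := Nat.add_le_add h3 h4
      _ ≤ i m * d + ∑ ℓ ∈ Finset.range (m+2), r ℓ * b (m+1-ℓ) := Nat.add_le_add_left h5 _
      _ = d * i m + ∑ ℓ ∈ Finset.range (m+2), r ℓ * b (m+1-ℓ) := by rw [Nat.mul_comm]
  -- move to the reals
  set Br : ℕ → ℝ := fun n => (b n : ℝ) with hBrdef
  have hBnn : ∀ n, 0 ≤ Br n := fun n => Nat.cast_nonneg _
  have hrec : ∀ m : ℕ, (d:ℝ) * Br m ≤ Br (m+1) + ∑ ℓ ∈ Finset.range (m+2), (r ℓ:ℝ) * Br (m+1-ℓ) := by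
    intro m
    have hkey := keycount m
    have e1 := hbi (m+1)
    have e2 := hbi m
    have c1 : ((i (m+1) : ℕ) : ℝ) ≤ (d:ℝ) * (i m : ℝ)
        + ∑ ℓ ∈ Finset.range (m+2), (r ℓ:ℝ) * Br (m+1-ℓ) := by
      have := (Nat.cast_le (α := ℝ)).mpr hkey
      push_cast at this
      convert this using 2
    have c2 : Br (m+1) + ((i (m+1):ℕ):ℝ) = (d:ℝ) ^ (m+1) := by
      show ((b (m+1):ℕ):ℝ) + _ = _
      exact_mod_cast e1
    have c3 : Br m + ((i m:ℕ):ℝ) = (d:ℝ) ^ m := by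
      show ((b m:ℕ):ℝ) + _ = _
      exact_mod_cast e2
    have c4 : (d:ℝ) * Br m + (d:ℝ) * ((i m:ℕ):ℝ) = (d:ℝ) ^ (m+1) := by
      rw [pow_succ]
      linear_combination (d:ℝ) * c3
    linarith
  -- the constants
  set D : ℝ := (d:ℝ) - ε with hDdef
  have hεd : ε < (d:ℝ) := by linarith
  have hD1 : 1 < D := by simp only [hDdef]; linarith
  have hD0 : 0 < D := by linarith
  set q : ℝ := ((d:ℝ) - 2*ε) / D with hqdef
  have hq0 : 0 ≤ q := by
    apply div_nonneg _ (le_of_lt hD0)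
    linarith
  have hq1 : q < 1 := by
    rw [hqdef, div_lt_one hD0]
    linarith
  have h1q : 1 - q = ε / D := by
    rw [hqdef]
    rw [eq_div_iff (ne_of_gt hD0)]
    rw [sub_mul, div_mul_cancel₀ _ (ne_of_gt hD0), hDdef]
    ring
  clear_value D q
  -- r is zero in degrees < 2
  have hr01 : ∀ ℓ, ℓ < 2 → r ℓ = 0 := by
    intro ℓ hℓ
    have hempty : {j | deg j = ℓ} = ∅ := by
      ext j
      simp only [Set.mem_setOf_eq, Set.mem_empty_iff_false, iff_false]
      intro h
      have := hdeg j
      omega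
    have := (hrcount ℓ).2
    rw [hempty, Set.ncard_empty] at this
    omega
  -- main recursion : B (n+1) ≥ D * B n
  have hmain : ∀ n : ℕ, D * Br n ≤ Br (n+1) := by
    intro n
    induction n using Nat.strong_induction_on with
    | _ n IH =>
    -- claim A
    have claimA : ∀ ℓ, 1 ≤ ℓ → ℓ ≤ n+1 → D^(ℓ-1) * Br (n+1-ℓ) ≤ Br n := by
      intro ℓ
      induction ℓ with
      | zero => omega
      | succ k IHk =>
        intro _ hkn
        rcases Nat.eq_zero_or_pos k with hk0 | hk1
        · subst hk0; simp
        · obtain ⟨k', rfl⟩ : ∃ k', k = k'+1 := ⟨k-1, by omega⟩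
          have hm : n - (k'+1) < n := by omega
          have hIHm := IH (n - (k'+1)) hm
          have e1 : n + 1 - (k'+1+1) = n - (k'+1) := by omega
          have e2 : n - (k'+1) + 1 = n + 1 - (k'+1) := by omega
          have hprev := IHk (by omega) (by omega)
          simp only [Nat.add_sub_cancel] at hprev ⊢
          calc D^(k'+1) * Br (n+1-(k'+1+1))
              = D^k' * (D * Br (n - (k'+1))) := by
                rw [e1, pow_succ]
                ring
            _ ≤ D^k' * Br (n - (k'+1) + 1) :=
                mul_le_mul_of_nonneg_left (hIHm) (pow_nonneg (le_of_lt hD0) _)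
            _ = D^k' * Br (n+1-(k'+1)) := by rw [e2]
            _ ≤ Br n := hprev
    -- the sum bound
    have hsum : ∑ ℓ ∈ Finset.range (n+2), (r ℓ:ℝ) * Br (n+1-ℓ) ≤ ε * Br n := by
      rw [Finset.sum_range_succ' (fun ℓ => (r ℓ:ℝ) * Br (n+1-ℓ)) (n+1),
        Finset.sum_range_succ' (fun k => (r (k+1):ℝ) * Br (n+1-(k+1))) n]
      have hz0 : ((r 0:ℕ):ℝ) * Br (n+1-0) = 0 := by rw [hr01 0 (by omega)]; simp
      have hz1 : ((r (0+1):ℕ):ℝ) * Br (n+1-(0+1)) = 0 := by rw [hr01 1 (by omega)]; simp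
      rw [hz0, hz1, add_zero, add_zero]
      have hterm : ∀ k ∈ Finset.range n,
          ((r (k+1+1):ℕ):ℝ) * Br (n+1-(k+1+1)) ≤ (ε^2/D) * q^k * Br n := by
        intro k hk
        have hkn : k < n := Finset.mem_range.mp hk
        have hA := claimA (k+2) (by omega) (by omega)
        have hApow : D^(k+1) * Br (n+1-(k+2)) ≤ Br n := by
          have : k+2-1 = k+1 := by omega
          rwa [this] at hA
        have hBle : Br (n+1-(k+2)) ≤ Br n / D^(k+1) := by
          rw [le_div_iff₀ (pow_pos hD0 _)]
          calc Br (n+1-(k+2)) * D^(k+1) = D^(k+1) * Br (n+1-(k+2)) := by ring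
            _ ≤ Br n := hApow
        have hrb := hrbound (k+2) (by omega)
        have hrk : (k+2) - 2 = k := by omega
        rw [hrk] at hrb
        calc ((r (k+1+1):ℕ):ℝ) * Br (n+1-(k+1+1))
            ≤ (ε^2 * ((d:ℝ) - 2*ε)^k) * (Br n / D^(k+1)) := by
              apply mul_le_mul hrb _ (hBnn _) (by positivity)
              show Br (n+1-(k+2)) ≤ Br n / D^(k+1)
              exact hBle
          _ = (ε^2/D) * q^k * Br n := by
              have hqk : q^k = ((d:ℝ)-2*ε)^k / D^k := by rw [hqdef, div_pow]
              rw [hqk, pow_succ]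
              simp only [div_eq_mul_inv, mul_inv]
              ring
      calc ∑ k ∈ Finset.range n, ((r (k+1+1):ℕ):ℝ) * Br (n+1-(k+1+1))
          ≤ ∑ k ∈ Finset.range n, (ε^2/D) * q^k * Br n := Finset.sum_le_sum hterm
        _ = (ε^2/D) * Br n * ∑ k ∈ Finset.range n, q^k := by
            rw [Finset.mul_sum]
            exact Finset.sum_congr rfl (fun k _ => by ring)
        _ ≤ (ε^2/D) * Br n * (1/(1-q)) := by
            apply mul_le_mul_of_nonneg_left _ (by positivity)
            have hgeo := geom_sum_mul q n
            rw [le_div_iff₀ (by linarith : (0:ℝ) < 1 - q)]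
            have hqn : 0 ≤ q^n := pow_nonneg hq0 n
            nlinarith
        _ = ε * Br n := by
            rw [h1q]
            field_simp
    have := hrec n
    have hd' : (d:ℝ) * Br n ≤ Br (n+1) + ε * Br n := by linarith
    simp only [hDdef]
    linarith
  -- growth
  have hgrow : ∀ n, D ^ n ≤ Br n := by
    intro n
    induction n with
    | zero => simp [hBrdef, hb0]
    | succ n ih =>
      calc D^(n+1) = D * D^n := by ring
        _ ≤ D * Br n := mul_le_mul_of_nonneg_left ih (le_of_lt hD0)
        _ ≤ Br (n+1) := hmain n
  have hb1 : ∀ n, 1 ≤ b n := by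
    intro n
    have h1 : (1:ℝ) ≤ D^n := one_le_pow₀ (le_of_lt hD1)
    have h2 : (1:ℝ) ≤ Br n := le_trans h1 (hgrow n)
    have : (1:ℝ) ≤ ((b n : ℕ) : ℝ) := h2
    exact_mod_cast this
  -- final contradiction
  haveI : Module.Finite F (↥(freeAlgAug F d) ⧸ (I.comap (freeAlgAug F d).subtype)) := hfin
  set N := Module.finrank F (↥(freeAlgAug F d) ⧸ (I.comap (freeAlgAug F d).subtype)) with hNdef
  have hvex : ∀ n : ℕ, ∃ w, w ∈ C (n+1) ∧ w ≠ 0 := by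
    intro n
    have hne : C (n+1) ≠ ⊥ := by
      intro hbot
      have hzero : b (n+1) = 0 := by
        show Module.finrank F ↥(C (n+1)) = 0
        rw [hbot]
        exact finrank_bot F _
      have := hb1 (n+1)
      omega
    obtain ⟨w, hw, hwne⟩ := Submodule.exists_mem_ne_zero_of_ne_bot hne
    exact ⟨w, hw, hwne⟩
  choose v hv hvne using hvex
  have hvgrade : ∀ n, v n ∈ freeAlgGrade F d (n+1) := fun n => hC1 (n+1) (hv n)
  have hvaug : ∀ n, v n ∈ freeAlgAug F d := by
    intro n
    have hle : freeAlgGrade F d (n+1) ≤ freeAlgAug F d :=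
      le_iSup (fun k => freeAlgGrade F d (k+1)) n
    exact hle (hvgrade n)
  set Q := I.comap (freeAlgAug F d).subtype with hQdef
  set vbar : Fin (N+1) → (↥(freeAlgAug F d) ⧸ Q) :=
    fun k => Q.mkQ ⟨v k, hvaug k⟩ with hvbardef
  have hCI : ∀ m, C m ⊓ I = ⊥ := by
    intro m
    rw [eq_bot_iff]
    rintro x ⟨hxC, hxI⟩
    have hx : x ∈ C m ⊓ (I ⊓ freeAlgGrade F d m) := ⟨hxC, hxI, hC1 m hxC⟩
    rw [hC2 m] at hx
    exact hx
  have hli : LinearIndependent F vbar := by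
    rw [Fintype.linearIndependent_iff]
    intro g hg idx
    have hsum0 : Q.mkQ (∑ k : Fin (N+1), g k • (⟨v k, hvaug k⟩ : ↥(freeAlgAug F d))) = 0 := by
      rw [map_sum]
      simp only [map_smul]
      exact hg
    have hmem : (∑ k : Fin (N+1), g k • (⟨v k, hvaug k⟩ : ↥(freeAlgAug F d))) ∈ Q := by
      rwa [← Submodule.ker_mkQ Q, LinearMap.mem_ker]
    have hmemI : (∑ k : Fin (N+1), g k • v k) ∈ I := by
      rw [hQdef, Submodule.mem_comap] at hmem
      have hcoe : ((freeAlgAug F d).subtype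
          (∑ k : Fin (N+1), g k • (⟨v k, hvaug k⟩ : ↥(freeAlgAug F d))))
          = ∑ k : Fin (N+1), g k • v k := by
        rw [map_sum]
        simp only [map_smul]
        rfl
      rwa [hcoe] at hmem
    have hpr := (GSaux3.pr_I hhom hI hdeg (n := idx.val+1) hmemI).1
    have hprval : pr F d (idx.val+1) (∑ k : Fin (N+1), g k • v k) = g idx • v idx := by
      rw [map_sum]
      rw [Finset.sum_eq_single idx]
      · rw [map_smul, GSaux2.pr_of_grade_self F d (hvgrade idx.val)]
      · intro k _ hk
        rw [map_smul, GSaux2.pr_of_grade_ne F d (m := k.val+1) (n := idx.val+1) ?_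
          (hvgrade k.val), smul_zero]
        intro hEq
        exact hk (Fin.ext (by omega))
      · intro h
        exact absurd (Finset.mem_univ idx) h
    have hfinal : g idx • v idx ∈ C (idx.val+1) ⊓ I :=
      ⟨Submodule.smul_mem _ _ (hv idx.val), by rw [← hprval]; exact hpr⟩
    rw [hCI] at hfinal
    have hfz := (Submodule.mem_bot F).mp hfinal
    rcases smul_eq_zero.mp hfz with h | h
    · exact h
    · exact absurd h (hvne idx.val)
  have hcard := hli.fintype_card_le_finrank
  rw [Fintype.card_fin] at hcard
  omega
end

section
/- Let F be a field, d ≥ 2, T = F⟨x₁,…,x_d⟩ graded by degree, R ⊆ T_{≥2} a graded subspace with R_k its homogeneous degree-k component and dim R_k ≤ r_k, I = TRT, and B a graded complement of I. Then for every n ≥ 2, I_n = I_{n−1}·T₁ + Σ_{k=2}^n B_{n−k}·R_k, and consequently dim I_n ≤ d·dim I_{n−1} + Σ_{j=0}^{n−2} b_j·r_{n−j}, where b_j = dim B_j. -/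
namespace GolodAux

open Submodule Module

variable (F : Type*) [Field F] (d : ℕ)

/-- Comparison map to the tensor algebra. -/
noncomputable def φ : FreeAlgebra F (Fin d) →ₐ[F] TensorAlgebra F (Fin d → F) :=
  FreeAlgebra.lift F fun i => TensorAlgebra.ι F (Pi.single i 1)

/-- Comparison map from the tensor algebra. -/
noncomputable def ψ : TensorAlgebra F (Fin d → F) →ₐ[F] FreeAlgebra F (Fin d) :=
  TensorAlgebra.lift F ((Pi.basisFun F (Fin d)).constr F fun i => FreeAlgebra.ι F i)

lemma ψ_φ (x : FreeAlgebra F (Fin d)) : ψ F d (φ F d x) = x := by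
  have h : (ψ F d).comp (φ F d) = AlgHom.id F _ := by
    apply FreeAlgebra.hom_ext
    funext i
    classical
    simp only [Function.comp_apply, AlgHom.coe_comp, AlgHom.coe_id, id_eq, φ, ψ,
      FreeAlgebra.lift_ι_apply, TensorAlgebra.lift_ι_apply]
    rw [← Pi.basisFun_apply, Basis.constr_basis]
  calc ψ F d (φ F d x) = ((ψ F d).comp (φ F d)) x := rfl
    _ = x := by rw [h]; rfl

lemma range_ιT :
    LinearMap.range (TensorAlgebra.ι F (M := Fin d → F)) =
      span F (Set.range fun i : Fin d => TensorAlgebra.ι F (Pi.single i (1 : F))) := by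
  classical
  conv_lhs => rw [LinearMap.range_eq_map, ← (Pi.basisFun F (Fin d)).span_eq,
    Submodule.map_span]
  rw [← Set.range_comp]
  congr 1
  apply congrArg
  funext i
  simp [Pi.basisFun_apply]

lemma map_φ_grade (n : ℕ) :
    Submodule.map (φ F d).toLinearMap (freeAlgGrade F d n) =
      LinearMap.range (TensorAlgebra.ι F (M := Fin d → F)) ^ n := by
  rw [freeAlgGrade, Submodule.map_pow]
  congr 1
  rw [Submodule.map_span, range_ιT, ← Set.range_comp]
  congr 1
  apply congrArg
  funext i
  simp [φ]

lemma map_ψ_grade (n : ℕ) :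
    Submodule.map (ψ F d).toLinearMap
        (LinearMap.range (TensorAlgebra.ι F (M := Fin d → F)) ^ n) =
      freeAlgGrade F d n := by
  classical
  rw [range_ιT, Submodule.map_pow, Submodule.map_span, ← Set.range_comp, freeAlgGrade]
  have hfun : (⇑(ψ F d).toLinearMap ∘ fun i : Fin d => TensorAlgebra.ι F (Pi.single i (1 : F))) =
      FreeAlgebra.ι F := by
    funext i
    simp only [Function.comp_apply, AlgHom.toLinearMap_apply, ψ, TensorAlgebra.lift_ι_apply]
    rw [← Pi.basisFun_apply, Basis.constr_basis]
  rw [hfun]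

lemma iSup_grade_eq_top : ⨆ n, freeAlgGrade F d n = ⊤ := by
  have hinternal := DirectSum.Decomposition.isInternal
    (fun n : ℕ => LinearMap.range (TensorAlgebra.ι F (M := Fin d → F)) ^ n)
  have htop := hinternal.submodule_iSup_eq_top
  have hsurj : Function.Surjective (ψ F d).toLinearMap := fun x => ⟨φ F d x, ψ_φ F d x⟩
  have h1 : Submodule.map (ψ F d).toLinearMap ⊤ = ⊤ := by
    rw [Submodule.map_top, LinearMap.range_eq_top.mpr hsurj]
  calc (⨆ n, freeAlgGrade F d n)
      = ⨆ n, Submodule.map (ψ F d).toLinearMap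
          (LinearMap.range (TensorAlgebra.ι F (M := Fin d → F)) ^ n) := by
        simp only [map_ψ_grade]
    _ = Submodule.map (ψ F d).toLinearMap
          (⨆ n, LinearMap.range (TensorAlgebra.ι F (M := Fin d → F)) ^ n) :=
        (Submodule.map_iSup _ _).symm
    _ = ⊤ := by rw [htop, h1]

lemma grade_iSupIndep : iSupIndep (freeAlgGrade F d) := by
  have hinternal := DirectSum.Decomposition.isInternal
    (fun n : ℕ => LinearMap.range (TensorAlgebra.ι F (M := Fin d → F)) ^ n)
  have h := hinternal.submodule_iSupIndep
  have hinj : Function.Injective (φ F d).toLinearMap :=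
    Function.LeftInverse.injective (ψ_φ F d)
  intro n
  rw [disjoint_iff]
  apply Submodule.map_injective_of_injective hinj
  rw [Submodule.map_inf _ hinj, Submodule.map_bot, Submodule.map_iSup]
  have h2 : ∀ m : ℕ, Submodule.map (φ F d).toLinearMap
      (⨆ (_ : m ≠ n), freeAlgGrade F d m) =
      ⨆ (_ : m ≠ n), LinearMap.range (TensorAlgebra.ι F (M := Fin d → F)) ^ m := by
    intro m
    rw [Submodule.map_iSup]
    exact iSup_congr fun _ => map_φ_grade F d m
  simp only [h2, map_φ_grade]
  exact disjoint_iff.mp (h n)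

/-- Key consequence of the grading: a sup of a family of graded pieces meets each
component in the corresponding piece. -/
lemma inf_grade_le {C : ℕ → Submodule F (FreeAlgebra F (Fin d))}
    (hC : ∀ m, C m ≤ freeAlgGrade F d m) (n : ℕ) :
    (⨆ m, C m) ⊓ freeAlgGrade F d n ≤ C n := by
  have h1 : (⨆ m, C m) ≤ C n ⊔ ⨆ m, ⨆ (_ : m ≠ n), freeAlgGrade F d m := by
    refine iSup_le fun m => ?_
    rcases eq_or_ne m n with rfl | hm
    · exact le_sup_left
    · exact le_sup_of_le_right
        ((hC m).trans (le_iSup₂ (f := fun m (_ : m ≠ n) => freeAlgGrade F d m) m hm))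
  refine le_trans (inf_le_inf_right _ h1) ?_
  rw [sup_inf_assoc_of_le _ (hC n)]
  have h2 : (⨆ m, ⨆ (_ : m ≠ n), freeAlgGrade F d m) ⊓ freeAlgGrade F d n = ⊥ := by
    rw [inf_comm]
    exact disjoint_iff.mp (grade_iSupIndep F d n)
  rw [h2, sup_bot_eq]

lemma fg_grade (n : ℕ) : (freeAlgGrade F d n).FG := by
  induction n with
  | zero =>
      rw [freeAlgGrade, pow_zero, Submodule.one_eq_span]
      exact Submodule.fg_span_singleton _
  | succ m ih =>
      rw [freeAlgGrade, pow_succ]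
      exact Submodule.FG.mul ih (Submodule.fg_span (Set.finite_range _))

lemma fd_of_le {p q : Submodule F (FreeAlgebra F (Fin d))} (h : p ≤ q) (hq : q.FG) :
    FiniteDimensional F p := by
  haveI := (Submodule.fg_iff_finiteDimensional q).mp hq
  exact Submodule.finiteDimensional_of_le h

lemma fg_of_le {p q : Submodule F (FreeAlgebra F (Fin d))} (h : p ≤ q) (hq : q.FG) :
    p.FG :=
  (Submodule.fg_iff_finiteDimensional p).mpr (fd_of_le F d h hq)

lemma exists_span_finset (V : Submodule F (FreeAlgebra F (Fin d))) (hV : V.FG) :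
    ∃ s : Finset (FreeAlgebra F (Fin d)),
      span F (s : Set (FreeAlgebra F (Fin d))) = V ∧ s.card ≤ finrank F V := by
  classical
  haveI := (Submodule.fg_iff_finiteDimensional V).mp hV
  let b := finBasis F V
  refine ⟨Finset.image (fun i => ((b i : V) : FreeAlgebra F (Fin d))) Finset.univ, ?_, ?_⟩
  · rw [Finset.coe_image, Finset.coe_univ, Set.image_univ]
    have h1 : Set.range (fun i => ((b i : V) : FreeAlgebra F (Fin d))) =
        V.subtype '' Set.range b := by
      rw [← Set.range_comp]; rfl
    rw [h1, Submodule.span_image, b.span_eq, Submodule.map_subtype_top]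
  · refine (Finset.card_image_le).trans ?_
    simp

lemma finrank_mul_le (V W : Submodule F (FreeAlgebra F (Fin d))) (hV : V.FG) (hW : W.FG) :
    finrank F ↥(V * W) ≤ finrank F V * finrank F W := by
  classical
  open scoped Pointwise in
  obtain ⟨s, hs, hsc⟩ := exists_span_finset F d V hV
  obtain ⟨t, ht, htc⟩ := exists_span_finset F d W hW
  have h1 : V * W = span F ((s * t : Finset _) : Set (FreeAlgebra F (Fin d))) := by
    rw [← hs, ← ht, Submodule.span_mul_span, Finset.coe_mul]
  rw [h1]
  calc finrank F ↥(span F ((s * t : Finset _) : Set (FreeAlgebra F (Fin d))))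
      ≤ (s * t).card := finrank_span_finset_le_card _
    _ ≤ s.card * t.card := Finset.card_mul_le
    _ ≤ finrank F V * finrank F W := Nat.mul_le_mul hsc htc

lemma finrank_grade_one_le : finrank F ↥(freeAlgGrade F d 1) ≤ d := by
  classical
  have h1 : freeAlgGrade F d 1 =
      span F ((Finset.image (FreeAlgebra.ι F) Finset.univ : Finset (FreeAlgebra F (Fin d))) :
        Set (FreeAlgebra F (Fin d))) := by
    rw [freeAlgGrade, pow_one]
    congr 1
    rw [Finset.coe_image, Finset.coe_univ, Set.image_univ]
  rw [h1]
  refine (finrank_span_finset_le_card _).trans ?_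
  refine Finset.card_image_le.trans ?_
  simp

lemma sum_le {s : Finset ℕ} {f : ℕ → Submodule F (FreeAlgebra F (Fin d))}
    {X : Submodule F (FreeAlgebra F (Fin d))} (h : ∀ k ∈ s, f k ≤ X) :
    ∑ k ∈ s, f k ≤ X := by
  classical
  induction s using Finset.induction_on with
  | empty => simp
  | insert _ _ hx ih =>
      rename_i a s'
      rw [Finset.sum_insert hx, Submodule.add_eq_sup]
      exact sup_le (h a (Finset.mem_insert_self _ _))
        (ih fun k hk => h k (Finset.mem_insert_of_mem hk))

lemma le_sum {s : Finset ℕ} {f : ℕ → Submodule F (FreeAlgebra F (Fin d))} {k : ℕ}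
    (hk : k ∈ s) : f k ≤ ∑ i ∈ s, f i := by
  classical
  rw [← Finset.add_sum_erase s f hk, Submodule.add_eq_sup]
  exact le_sup_left

lemma fg_sum {s : Finset ℕ} {f : ℕ → Submodule F (FreeAlgebra F (Fin d))}
    (h : ∀ k ∈ s, (f k).FG) : (∑ k ∈ s, f k).FG := by
  classical
  induction s using Finset.induction_on with
  | empty => simpa using Submodule.fg_bot
  | insert _ _ hx ih =>
      rename_i a s'
      rw [Finset.sum_insert hx, Submodule.add_eq_sup]
      exact Submodule.FG.sup (h a (Finset.mem_insert_self _ _))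
        (ih fun k hk => h k (Finset.mem_insert_of_mem hk))

lemma finrank_sum_le {s : Finset ℕ} {f : ℕ → Submodule F (FreeAlgebra F (Fin d))}
    (h : ∀ k ∈ s, (f k).FG) :
    finrank F ↥(∑ k ∈ s, f k) ≤ ∑ k ∈ s, finrank F ↥(f k) := by
  classical
  induction s using Finset.induction_on with
  | empty => simp; exact finrank_bot F _
  | insert _ _ hx ih =>
      rename_i a s'
      rw [Finset.sum_insert hx, Finset.sum_insert hx, Submodule.add_eq_sup]
      haveI : FiniteDimensional F ↥(f a) :=
        (Submodule.fg_iff_finiteDimensional _).mp (h a (Finset.mem_insert_self _ _))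
      haveI : FiniteDimensional F ↥(∑ k ∈ s', f k) :=
        (Submodule.fg_iff_finiteDimensional _).mp
          (fg_sum F d fun k hk => h k (Finset.mem_insert_of_mem hk))
      refine (Submodule.finrank_add_le_finrank_add_finrank _ _).trans ?_
      exact add_le_add_right (ih fun k hk => h k (Finset.mem_insert_of_mem hk)) _

end GolodAux

open GolodAux Submodule Module in
theorem golod_graded_components_inequality
    (F : Type*) [Field F] (d : ℕ) (hd : 2 ≤ d)
    (R I B : Submodule F (FreeAlgebra F (Fin d)))
    (hRle : R ≤ ⨆ k, freeAlgGrade F d (k + 2))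
    (hRgraded : R = ⨆ k, R ⊓ freeAlgGrade F d k)
    (hI : I = ⊤ * R * ⊤)
    (hB : IsCompl I B)
    (hBgraded : B = ⨆ n, B ⊓ freeAlgGrade F d n)
    (r : ℕ → ℕ)
    (hr : ∀ k, Module.finrank F ↥(R ⊓ freeAlgGrade F d k) ≤ r k) :
    ∀ n : ℕ, 2 ≤ n →
      (I ⊓ freeAlgGrade F d n =
        (I ⊓ freeAlgGrade F d (n - 1)) * freeAlgGrade F d 1 ⊔
          ∑ k ∈ Finset.Icc 2 n,
            (B ⊓ freeAlgGrade F d (n - k)) * (R ⊓ freeAlgGrade F d k)) ∧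
      Module.finrank F ↥(I ⊓ freeAlgGrade F d n) ≤
        d * Module.finrank F ↥(I ⊓ freeAlgGrade F d (n - 1)) +
          ∑ j ∈ Finset.range (n - 1),
            Module.finrank F ↥(B ⊓ freeAlgGrade F d j) * r (n - j) := by
  classical
  have hTmul : ∀ a b : ℕ,
      freeAlgGrade F d a * freeAlgGrade F d b = freeAlgGrade F d (a + b) :=
    fun a b => (pow_add _ a b).symm
  have htt : (⊤ : Submodule F (FreeAlgebra F (Fin d))) * ⊤ = ⊤ :=
    le_antisymm le_top
      (le_trans (le_of_eq (Submodule.mul_one ⊤).symm) (mul_le_mul' le_rfl le_top))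
  have hItop : I * ⊤ = I := by rw [hI, mul_assoc (⊤ * R) ⊤ ⊤, htt]
  have hIle : ∀ M N : Submodule F (FreeAlgebra F (Fin d)), M ≤ I → M * N ≤ I :=
    fun M N h => (mul_le_mul' h le_top).trans hItop.le
  have hRIle : ∀ N : Submodule F (FreeAlgebra F (Fin d)), N ≤ R →
      (⊤ : Submodule F (FreeAlgebra F (Fin d))) * N ≤ I := by
    intro N h
    rw [hI]
    refine le_trans (le_of_eq (Submodule.mul_one _).symm) ?_
    exact mul_le_mul' (mul_le_mul' le_rfl h) le_top
  -- vanishing of low-degree components of R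
  have hR0 : ∀ k, k < 2 → R ⊓ freeAlgGrade F d k = ⊥ := by
    intro k hk
    have h1 : R ≤ ⨆ m, (if 2 ≤ m then freeAlgGrade F d m else ⊥) := by
      refine hRle.trans (iSup_le fun j => ?_)
      have h2 : freeAlgGrade F d (j + 2) =
          (if 2 ≤ j + 2 then freeAlgGrade F d (j + 2) else ⊥) := by simp
      exact h2.le.trans (le_iSup (fun m => if 2 ≤ m then freeAlgGrade F d m else ⊥) (j + 2))
    refine le_bot_iff.mp ?_
    have h3 := inf_grade_le F d
      (C := fun m => if 2 ≤ m then freeAlgGrade F d m else ⊥)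
      (fun m => by by_cases h : 2 ≤ m <;> simp [h]) k
    calc R ⊓ freeAlgGrade F d k
        ≤ (⨆ m, (if 2 ≤ m then freeAlgGrade F d m else ⊥)) ⊓ freeAlgGrade F d k :=
          inf_le_inf_right _ h1
      _ ≤ (if 2 ≤ k then freeAlgGrade F d k else ⊥) := h3
      _ = ⊥ := if_neg (by omega)
  -- decomposition principle for I
  have hIdec : ∀ Y : ℕ → Submodule F (FreeAlgebra F (Fin d)),
      (∀ a k b, 2 ≤ k →
        freeAlgGrade F d a * (R ⊓ freeAlgGrade F d k) * freeAlgGrade F d b ≤ Y (a + k + b)) →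
      I ≤ ⨆ m, Y m := by
    intro Y hY
    rw [hI]
    conv_lhs => rw [← iSup_grade_eq_top F d, hRgraded]
    simp only [Submodule.iSup_mul, Submodule.mul_iSup]
    refine iSup_le fun a => iSup_le fun k => iSup_le fun b => ?_
    by_cases hk : 2 ≤ k
    · exact (hY b k a hk).trans (le_iSup Y (b + k + a))
    · rw [hR0 k (by omega), Submodule.mul_bot, Submodule.bot_mul]
      exact bot_le
  have hIgr : I ≤ ⨆ m, (I ⊓ freeAlgGrade F d m) := by
    refine hIdec _ fun a k b _ => le_inf ?_ ?_
    · rw [hI]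
      exact mul_le_mul' (mul_le_mul' le_top inf_le_left) le_top
    · refine le_trans
        (mul_le_mul' (mul_le_mul' le_rfl inf_le_right) le_rfl) ?_
      rw [hTmul, hTmul]
  have hTsplit : ∀ a, freeAlgGrade F d a ≤
      (I ⊓ freeAlgGrade F d a) ⊔ (B ⊓ freeAlgGrade F d a) := by
    intro a
    have h1 : (⊤ : Submodule F (FreeAlgebra F (Fin d))) ≤
        ⨆ m, ((I ⊓ freeAlgGrade F d m) ⊔ (B ⊓ freeAlgGrade F d m)) := by
      rw [← hB.sup_eq_top]
      refine sup_le (hIgr.trans (iSup_mono fun m => le_sup_left)) ?_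
      conv_lhs => rw [hBgraded]
      exact iSup_mono fun m => le_sup_right
    have h2 := inf_grade_le F d
      (C := fun m => (I ⊓ freeAlgGrade F d m) ⊔ (B ⊓ freeAlgGrade F d m))
      (fun m => sup_le inf_le_right inf_le_right) a
    calc freeAlgGrade F d a = ⊤ ⊓ freeAlgGrade F d a := by rw [top_inf_eq]
      _ ≤ (⨆ m, ((I ⊓ freeAlgGrade F d m) ⊔ (B ⊓ freeAlgGrade F d m))) ⊓ freeAlgGrade F d a :=
          inf_le_inf_right _ h1
      _ ≤ _ := h2
  intro n hn
  -- the degree-m candidate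
  set E : ℕ → Submodule F (FreeAlgebra F (Fin d)) := fun m =>
    (I ⊓ freeAlgGrade F d (m - 1)) * freeAlgGrade F d 1 ⊔
      ∑ k ∈ Finset.Icc 2 m, (B ⊓ freeAlgGrade F d (m - k)) * (R ⊓ freeAlgGrade F d k)
    with hEdef
  have hEleT : ∀ m, 1 ≤ m → E m ≤ freeAlgGrade F d m := by
    intro m hm
    refine sup_le ?_ (sum_le F d fun k hk => ?_)
    · refine le_trans (mul_le_mul' inf_le_right le_rfl) ?_
      rw [hTmul]
      have : m - 1 + 1 = m := by omega
      rw [this]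
    · obtain ⟨hk2, hkm⟩ := Finset.mem_Icc.mp hk
      refine le_trans (mul_le_mul' inf_le_right inf_le_right) ?_
      rw [hTmul]
      have : m - k + k = m := by omega
      rw [this]
  have hCle : ∀ m, (if 2 ≤ m then E m else ⊥) ≤ freeAlgGrade F d m := by
    intro m
    split
    · exact hEleT m (by omega)
    · exact bot_le
  -- the main containment for pieces
  have hpiece : ∀ a k b, 2 ≤ k →
      freeAlgGrade F d a * (R ⊓ freeAlgGrade F d k) * freeAlgGrade F d b ≤ E (a + k + b) := by
    intro a k b hk
    cases b with
    | zero =>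
        have h0 : freeAlgGrade F d 0 = 1 := pow_zero _
        rw [h0, Submodule.mul_one, Nat.add_zero]
        refine le_trans (mul_le_mul' (hTsplit a) le_rfl) ?_
        rw [Submodule.sup_mul]
        refine sup_le ?_ ?_
        · have h1 : R ⊓ freeAlgGrade F d k ≤ freeAlgGrade F d (k - 1) * freeAlgGrade F d 1 := by
            rw [hTmul]
            have : k - 1 + 1 = k := by omega
            rw [this]
            exact inf_le_right
          refine le_trans (mul_le_mul' le_rfl h1) ?_
          rw [← mul_assoc]
          refine le_sup_of_le_left (mul_le_mul' ?_ le_rfl)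
          refine le_inf (hIle _ _ inf_le_left) ?_
          refine le_trans (mul_le_mul' inf_le_right le_rfl) ?_
          rw [hTmul]
          have : a + (k - 1) = a + k - 1 := by omega
          rw [this]
        · refine le_sup_of_le_right ?_
          have hmem : k ∈ Finset.Icc 2 (a + k) := Finset.mem_Icc.mpr ⟨hk, by omega⟩
          refine le_trans ?_ (le_sum F d hmem)
          have : a + k - k = a := by omega
          rw [this]
    | succ c =>
        have h1 : freeAlgGrade F d (c + 1) = freeAlgGrade F d c * freeAlgGrade F d 1 :=
          (hTmul c 1).symm
        rw [h1, ← mul_assoc]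
        refine le_sup_of_le_left (mul_le_mul' ?_ le_rfl)
        refine le_inf ?_ ?_
        · rw [hI]
          exact mul_le_mul' (mul_le_mul' le_top inf_le_left) le_top
        · refine le_trans
            (mul_le_mul' (mul_le_mul' le_rfl inf_le_right) le_rfl) ?_
          rw [hTmul, hTmul]
          have : a + k + c = a + k + (c + 1) - 1 := by omega
          rw [this]
  -- the equality
  have heq : I ⊓ freeAlgGrade F d n = E n := by
    refine le_antisymm ?_ ?_
    · have hIE : I ≤ ⨆ m, (if 2 ≤ m then E m else ⊥) := by
        refine hIdec _ fun a k b hk => ?_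
        have hm : 2 ≤ a + k + b := by omega
        rw [if_pos hm]
        exact hpiece a k b hk
      refine le_trans (inf_le_inf_right _ hIE) ?_
      refine le_trans (inf_grade_le F d hCle n) ?_
      rw [if_pos hn]
    · refine sup_le (le_inf (hIle _ _ inf_le_left) ?_) (sum_le F d fun k hk => le_inf ?_ ?_)
      · refine le_trans (mul_le_mul' inf_le_right le_rfl) ?_
        rw [hTmul]
        have : n - 1 + 1 = n := by omega
        rw [this]
      · exact le_trans (mul_le_mul' le_top inf_le_left) (hRIle R le_rfl)
      · obtain ⟨hk2, hkn⟩ := Finset.mem_Icc.mp hk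
        refine le_trans (mul_le_mul' inf_le_right inf_le_right) ?_
        rw [hTmul]
        have : n - k + k = n := by omega
        rw [this]
  refine ⟨heq, ?_⟩
  -- dimension estimate
  have fgT : ∀ m, (freeAlgGrade F d m).FG := fg_grade F d
  have fg_inf : ∀ (M : Submodule F (FreeAlgebra F (Fin d))) m,
      (M ⊓ freeAlgGrade F d m).FG := fun M m => fg_of_le F d inf_le_right (fgT m)
  have hprod : Module.finrank F ↥((I ⊓ freeAlgGrade F d (n - 1)) * freeAlgGrade F d 1) ≤
      d * Module.finrank F ↥(I ⊓ freeAlgGrade F d (n - 1)) := by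
    refine (finrank_mul_le F d _ _ (fg_inf I (n - 1)) (fgT 1)).trans ?_
    rw [mul_comm]
    exact Nat.mul_le_mul (finrank_grade_one_le F d) le_rfl
  have hsum : Module.finrank F
        ↥(∑ k ∈ Finset.Icc 2 n, (B ⊓ freeAlgGrade F d (n - k)) * (R ⊓ freeAlgGrade F d k)) ≤
      ∑ j ∈ Finset.range (n - 1),
        Module.finrank F ↥(B ⊓ freeAlgGrade F d j) * r (n - j) := by
    refine le_trans (finrank_sum_le F d fun k _ =>
      Submodule.FG.mul (fg_inf B (n - k)) (fg_inf R k)) ?_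
    have h1 : ∀ k ∈ Finset.Icc 2 n,
        Module.finrank F ↥((B ⊓ freeAlgGrade F d (n - k)) * (R ⊓ freeAlgGrade F d k)) ≤
          Module.finrank F ↥(B ⊓ freeAlgGrade F d (n - k)) * r k := fun k _ =>
      (finrank_mul_le F d _ _ (fg_inf B (n - k)) (fg_inf R k)).trans
        (Nat.mul_le_mul le_rfl (hr k))
    refine le_trans (Finset.sum_le_sum h1) (le_of_eq ?_)
    refine Finset.sum_bij' (fun k _ => n - k) (fun j _ => n - j) ?_ ?_ ?_ ?_ ?_
    · intro k hk
      obtain ⟨hk2, hkn⟩ := Finset.mem_Icc.mp hk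
      simp only [Finset.mem_range]
      omega
    · intro j hj
      have := Finset.mem_range.mp hj
      simp only [Finset.mem_Icc]
      omega
    · intro k hk
      obtain ⟨hk2, hkn⟩ := Finset.mem_Icc.mp hk
      omega
    · intro j hj
      have := Finset.mem_range.mp hj
      omega
    · intro k hk
      obtain ⟨hk2, hkn⟩ := Finset.mem_Icc.mp hk
      have h2 : n - (n - k) = k := by omega
      rw [h2]
  haveI : FiniteDimensional F ↥((I ⊓ freeAlgGrade F d (n - 1)) * freeAlgGrade F d 1) :=
    (Submodule.fg_iff_finiteDimensional _).mp (Submodule.FG.mul (fg_inf I (n - 1)) (fgT 1))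
  haveI : FiniteDimensional F
      ↥(∑ k ∈ Finset.Icc 2 n, (B ⊓ freeAlgGrade F d (n - k)) * (R ⊓ freeAlgGrade F d k)) :=
    (Submodule.fg_iff_finiteDimensional _).mp
      (fg_sum F d fun k _ => Submodule.FG.mul (fg_inf B (n - k)) (fg_inf R k))
  calc Module.finrank F ↥(I ⊓ freeAlgGrade F d n) = Module.finrank F ↥(E n) := by rw [heq]
    _ ≤ Module.finrank F ↥((I ⊓ freeAlgGrade F d (n - 1)) * freeAlgGrade F d 1) +
        Module.finrank F
          ↥(∑ k ∈ Finset.Icc 2 n, (B ⊓ freeAlgGrade F d (n - k)) * (R ⊓ freeAlgGrade F d k)) :=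
      Submodule.finrank_add_le_finrank_add_finrank _ _
    _ ≤ _ := add_le_add hprod hsum
end
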